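/- arXiv:2203.05639 — 3 statements merged into one kernel-verified Lean document; each statement's English description precedes it below -/
import Mathlib

section
/- Let {q_k}_{k≥0} be a non-increasing sequence of positive reals. Then the maximal operator of the Walsh–Nörlund means is not bounded from the dyadic Hardy space H_{1/2}[0,1) to L^{1/2}[0,1): there is no constant C such that ‖t*(f)‖_{L^{1/2}} ≤ C ‖f‖_{H_{1/2}} for all f ∈ L¹[0,1) with ‖f‖_{H_{1/2}} < ∞. -/
open MeasureTheory Filter
open scoped ENNReal NNReal

noncomputable section

namespace Walsh

/-- Lebesgue measure restricted to `[0,1)`. -/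
def μI : Measure ℝ := volume.restrict (Set.Ico (0:ℝ) 1)

/-- The `k`-th binary digit `x_k` of `x ∈ [0,1)`, using the expansion terminating
in `0`'s for dyadic rationals. -/
def digit (k : ℕ) (x : ℝ) : ℕ := (⌊x * 2 ^ (k + 1)⌋).toNat % 2

/-- `ε_k(n)`, the `k`-th binary coefficient of `n`. -/
def eps (k n : ℕ) : ℕ := if n.testBit k then 1 else 0

/-- Walsh–Paley function `w_n(x) = (-1)^{Σ_k ε_k(n) x_k}`. -/
def walsh (n : ℕ) (x : ℝ) : ℝ :=
  (-1 : ℝ) ^ (∑ k ∈ Finset.range (n + 1), eps k n * digit k x)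

/-- Walsh–Dirichlet kernel `D_n = Σ_{k=0}^{n-1} w_k`. -/
def D (n : ℕ) (x : ℝ) : ℝ := ∑ k ∈ Finset.range n, walsh k x

/-- Walsh–Fejér kernel `K_n = (1/n) Σ_{k=1}^{n} D_k`. -/
def K (n : ℕ) (x : ℝ) : ℝ := (1 / (n : ℝ)) * ∑ k ∈ Finset.Icc 1 n, D k x

/-- Partial sums `S_M(f) = Σ_{i=0}^{M-1} f̂(i) w_i` of the Walsh–Fourier series. -/
def S (f : ℝ → ℝ) (M : ℕ) (x : ℝ) : ℝ :=
  ∑ i ∈ Finset.range M, (∫ t in Set.Ico (0:ℝ) 1, f t * walsh i t) * walsh i x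

/-- `Q_n = q_0 + ⋯ + q_{n-1}`. -/
def Q (q : ℕ → ℝ) (n : ℕ) : ℝ := ∑ k ∈ Finset.range n, q k

/-- Walsh–Nörlund mean `t_n(f) = (1/Q_n) Σ_{k=1}^n q_{n-k} S_k(f)`. -/
def t (q : ℕ → ℝ) (n : ℕ) (f : ℝ → ℝ) (x : ℝ) : ℝ :=
  (1 / Q q n) * ∑ k ∈ Finset.Icc 1 n, q (n - k) * S f k x

/-- Walsh–Nörlund kernel `F_n = (1/Q_n) Σ_{k=1}^n q_{n-k} D_k`. -/
def F (q : ℕ → ℝ) (n : ℕ) (x : ℝ) : ℝ :=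
  (1 / Q q n) * ∑ k ∈ Finset.Icc 1 n, q (n - k) * D k x

/-- Maximal Nörlund operator `t^*(f) = sup_{n ≥ 1} |t_n(f)|`, valued in `ℝ≥0∞`. -/
def tstar (q : ℕ → ℝ) (f : ℝ → ℝ) (x : ℝ) : ℝ≥0∞ :=
  ⨆ n ∈ Set.Ici 1, ENNReal.ofReal |t q n f x|

/-- `L^p[0,1)` quasinorm (`0 < p ≤ 1`) of a real function, valued in `ℝ≥0∞`. -/
def LpNorm (p : ℝ) (g : ℝ → ℝ) : ℝ≥0∞ :=
  (∫⁻ x in Set.Ico (0:ℝ) 1, ENNReal.ofReal |g x| ^ p) ^ (1 / p)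

/-- `L^p[0,1)` quasinorm of an `ℝ≥0∞`-valued function. -/
def LpNormE (p : ℝ) (g : ℝ → ℝ≥0∞) : ℝ≥0∞ :=
  (∫⁻ x in Set.Ico (0:ℝ) 1, g x ^ p) ^ (1 / p)

/-- `L^∞[0,1)` norm. -/
def LinfNorm (g : ℝ → ℝ) : ℝ≥0∞ := essSup (fun x => ENNReal.ofReal |g x|) μI

/-- Dyadic maximal function `E^*(f) = sup_m |S_{2^m}(f)|`, valued in `ℝ≥0∞`. -/
def maxS (f : ℝ → ℝ) (x : ℝ) : ℝ≥0∞ := ⨆ m : ℕ, ENNReal.ofReal |S f (2 ^ m) x|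

/-- Dyadic Hardy space quasinorm `‖f‖_{H_p} = ‖sup_m |S_{2^m} f|‖_{L^p}`. -/
def HpNorm (p : ℝ) (f : ℝ → ℝ) : ℝ≥0∞ :=
  (∫⁻ x in Set.Ico (0:ℝ) 1, maxS f x ^ p) ^ (1 / p)

/-- Dyadic (logical) addition `x ∔ y = Σ_k |x_k - y_k| 2^{-(k+1)}`. -/
def dadd (x y : ℝ) : ℝ :=
  ∑' k : ℕ, |(digit k x : ℝ) - (digit k y : ℝ)| * (2 : ℝ)⁻¹ ^ (k + 1)

/-- The dyadic interval `I_N = [0, 2^{-N})`. -/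
def IN (N : ℕ) : Set ℝ := Set.Ico (0:ℝ) (1 / 2 ^ N)

/-- `F_{n,1} = (w_n/Q_n) Σ_{j=1}^r Q_{n^{(j-1)}} w_{2^{n_j}} D_{2^{n_j}}`,
the first part of the Nörlund kernel decomposition. The sum over the binary
decomposition `n = 2^{n_1} + ⋯ + 2^{n_r}` is re-indexed over the set bit
positions `i` of `n`; if `i = n_j` then `n^{(j-1)} = n mod 2^{i+1}`. -/
def F1 (q : ℕ → ℝ) (n : ℕ) (x : ℝ) : ℝ :=
  (walsh n x / Q q n) *
    ∑ i ∈ Finset.range (n + 1),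
      if n.testBit i then Q q (n % 2 ^ (i + 1)) * walsh (2 ^ i) x * D (2 ^ i) x else 0

end Walsh
namespace WalshAux
open Walsh

lemma digit_lt_two (k : ℕ) (x : ℝ) : digit k x < 2 := Nat.mod_lt _ (by norm_num)

lemma digit_eq_zero {s k : ℕ} {x : ℝ} (hx : x ∈ Set.Ico (0:ℝ) (1 / 2^s)) (hk : k < s) :
    digit k x = 0 := by
  have h2s : (0:ℝ) < 2^s := by positivity
  have hle : (2:ℝ)^(k+1) ≤ 2^s := by
    apply pow_le_pow_right₀ (by norm_num) (by omega)
  have h1 : (0:ℝ) ≤ x * 2^(k+1) := mul_nonneg hx.1 (by positivity)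
  have h2 : x * 2^(k+1) < 1 := by
    have hx2 := hx.2
    have : x * 2^(k+1) ≤ x * 2^s := mul_le_mul_of_nonneg_left hle hx.1
    have : x * 2^s < (1/2^s) * 2^s := by
      apply mul_lt_mul_of_pos_right hx2 h2s
    have h3 : (1/2^s) * (2:ℝ)^s = 1 := by field_simp
    nlinarith
  have : ⌊x * 2^(k+1)⌋ = 0 := by
    rw [Int.floor_eq_zero_iff]; exact ⟨h1, h2⟩
  simp [digit, this]

lemma eps_eq_zero_of_lt {k n : ℕ} (h : n < 2^k) : eps k n = 0 := by
  simp [eps, Nat.testBit_lt_two_pow h]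

lemma walsh_eq_sum {n M : ℕ} (h : n < M) (x : ℝ) :
    walsh n x = (-1:ℝ)^(∑ k ∈ Finset.range M, eps k n * digit k x) := by
  unfold walsh
  congr 1
  apply Finset.sum_subset (Finset.range_subset_range.2 h)
  intro k _ hk
  simp only [Finset.mem_range, not_lt] at hk
  have h2 : n < 2^k := lt_of_lt_of_le (Nat.lt_two_pow_self (n := n))
    (Nat.pow_le_pow_right (by norm_num) (by omega))
  rw [eps_eq_zero_of_lt h2, zero_mul]

lemma neg_one_pow_mod (a : ℕ) : (-1:ℝ)^a = (-1)^(a % 2) := by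
  conv_lhs => rw [← Nat.div_add_mod a 2, pow_add, pow_mul]
  simp

lemma neg_one_pow_congr {a b : ℕ} (h : a % 2 = b % 2) : (-1:ℝ)^a = (-1)^b := by
  rw [neg_one_pow_mod a, neg_one_pow_mod b, h]

lemma walsh_mul (a b : ℕ) (x : ℝ) :
    walsh a x * walsh b x = walsh (a ^^^ b) x := by
  set M := max (max a b) (a ^^^ b) + 1 with hM
  have ha : a < M := by omega
  have hb : b < M := by omega
  have hx : a ^^^ b < M := by omega
  rw [walsh_eq_sum ha, walsh_eq_sum hb, walsh_eq_sum hx, ← pow_add]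
  apply neg_one_pow_congr
  rw [← Finset.sum_add_distrib, Finset.sum_nat_mod]
  conv_rhs => rw [Finset.sum_nat_mod]
  congr 1
  apply Finset.sum_congr rfl
  intro k _
  have hd := digit_lt_two k x
  simp only [eps, Nat.testBit_xor]
  cases hta : a.testBit k <;> cases htb : b.testBit k <;> simp <;> omega

lemma abs_walsh (n : ℕ) (x : ℝ) : |walsh n x| = 1 := by
  unfold walsh
  rw [abs_pow, abs_neg, abs_one, one_pow]

lemma walsh_eq_one {n s : ℕ} (hn : n < 2^s) {x : ℝ}
    (hx : x ∈ Set.Ico (0:ℝ) (1/2^s)) : walsh n x = 1 := by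
  unfold walsh
  rw [Finset.sum_eq_zero, pow_zero]
  intro k _
  by_cases hk : k < s
  · rw [digit_eq_zero hx hk, mul_zero]
  · have h2 : n < 2^k := lt_of_lt_of_le hn
      (Nat.pow_le_pow_right (by norm_num) (by omega))
    rw [eps_eq_zero_of_lt h2, zero_mul]

lemma walsh_zero (x : ℝ) : walsh 0 x = 1 := by
  unfold walsh
  rw [Finset.sum_eq_zero, pow_zero]
  intro k _
  rw [eps_eq_zero_of_lt (Nat.two_pow_pos k), zero_mul]

lemma digit_of_mem {M j k : ℕ} (hj : j < 2^M) (hk : k < M) {x : ℝ}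
    (hx : x ∈ Set.Ico ((j:ℝ)/2^M) (((j:ℝ)+1)/2^M)) :
    digit k x = (j / 2^(M-1-k)) % 2 := by
  set c := M - 1 - k with hc
  have hMc : M = (k+1) + c := by omega
  set qn := j / 2^c with hq
  have hqc : qn * 2^c ≤ j := Nat.div_mul_le_self j (2^c)
  have hjq : j < (qn + 1) * 2^c := by
    have h1 := Nat.div_add_mod j (2^c)
    have h2 : j % 2^c < 2^c := Nat.mod_lt _ (Nat.two_pow_pos c)
    have h3 : (qn+1) * 2^c = 2^c * qn + 2^c := by ring
    rw [← hq] at h1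
    linarith
  have hP : (0:ℝ) < 2^(k+1) := by positivity
  have hC : (0:ℝ) < 2^c := by positivity
  have hM2 : (2:ℝ)^M = 2^(k+1) * 2^c := by rw [hMc, pow_add]
  have hfloor : ⌊x * 2^(k+1)⌋ = (qn : ℤ) := by
    rw [Int.floor_eq_iff]
    constructor
    · push_cast
      have h1 : (qn:ℝ) * 2^c ≤ j := by exact_mod_cast hqc
      have h2 : (j:ℝ)/2^M ≤ x := hx.1
      rw [hM2, div_le_iff₀ (by positivity)] at h2
      nlinarith
    · push_cast
      have h1 : (j:ℝ) + 1 ≤ ((qn:ℝ) + 1) * 2^c := by exact_mod_cast hjq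
      have h2 : x < ((j:ℝ)+1)/2^M := hx.2
      rw [hM2, lt_div_iff₀ (by positivity)] at h2
      nlinarith [hC, mul_pos hP hC]
  simp [digit, hfloor]

lemma Ico_eq_biUnion (M : ℕ) :
    Set.Ico (0:ℝ) 1 =
      ⋃ j ∈ Finset.range (2^M), Set.Ico ((j:ℝ)/2^M) (((j:ℝ)+1)/2^M) := by
  have hM : (0:ℝ) < 2^M := by positivity
  ext x
  simp only [Set.mem_iUnion, Finset.mem_range, Set.mem_Ico]
  constructor
  · rintro ⟨hx0, hx1⟩
    have h0 : (0:ℝ) ≤ x * 2^M := by positivity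
    have hnn : (0:ℤ) ≤ ⌊x * 2^M⌋ := Int.floor_nonneg.2 h0
    have hlt : ⌊x * 2^M⌋ < 2^M := by
      apply Int.floor_lt.2
      push_cast
      nlinarith
    have hcast2 : ((2:ℤ)^M) = ((2^M : ℕ) : ℤ) := by push_cast; ring
    refine ⟨(⌊x * 2^M⌋).toNat, by omega, ?_, ?_⟩
    · rw [div_le_iff₀ hM]
      have := Int.floor_le (x * 2^M)
      have hcast : ((⌊x * 2^M⌋.toNat : ℕ):ℝ) = ((⌊x * 2^M⌋ : ℤ):ℝ) := by
        exact_mod_cast Int.toNat_of_nonneg hnn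
      rw [hcast]
      linarith
    · rw [lt_div_iff₀ hM]
      have := Int.lt_floor_add_one (x * 2^M)
      have hcast : ((⌊x * 2^M⌋.toNat : ℕ):ℝ) = ((⌊x * 2^M⌋ : ℤ):ℝ) := by
        exact_mod_cast Int.toNat_of_nonneg hnn
      rw [hcast]
      linarith
  · rintro ⟨j, hj, hx1, hx2⟩
    constructor
    · have : (0:ℝ) ≤ (j:ℝ)/2^M := by positivity
      linarith
    · have hj1 : ((j:ℝ)+1) ≤ 2^M := by
        have : (j:ℝ) + 1 ≤ ((2^M : ℕ):ℝ) := by exact_mod_cast hj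
        push_cast at this ⊢
        linarith
      have : ((j:ℝ)+1)/2^M ≤ 1 := by
        rw [div_le_one hM]; exact hj1
      linarith

lemma measurable_digit (k : ℕ) : Measurable fun x : ℝ => digit k x := by
  have h1 : Measurable fun x : ℝ => ⌊x * 2^(k+1)⌋ :=
    (measurable_id.mul_const _).floor
  exact (Measurable.of_discrete (f := fun z : ℤ => z.toNat % 2)).comp h1

lemma measurable_walsh (n : ℕ) : Measurable (walsh n) := by
  have h1 : Measurable fun x : ℝ => ∑ k ∈ Finset.range (n+1), eps k n * digit k x := by
    apply Finset.measurable_sum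
    intro k _
    exact (measurable_digit k).const_mul _
  exact (Measurable.of_discrete (f := fun e : ℕ => (-1:ℝ)^e)).comp h1

lemma integrableOn_walsh {n : ℕ} {s : Set ℝ} (hs : MeasurableSet s)
    (hv : volume s < ⊤) : IntegrableOn (walsh n) s := by
  apply Integrable.mono' (g := fun _ => (1:ℝ))
  · exact integrableOn_const (C := (1:ℝ)) hv.ne
  · exact (measurable_walsh n).aestronglyMeasurable
  · filter_upwards with x
    simp [Real.norm_eq_abs, abs_walsh]

lemma div_pow_mod_two (a d : ℕ) : a / 2^d % 2 = if a.testBit d then 1 else 0 := by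
  have h := Nat.testBit_eq_decide_div_mod_eq (x := a) (i := d)
  have h2 : a / 2^d % 2 < 2 := Nat.mod_lt _ (by norm_num)
  rcases ht : a.testBit d
  · rw [ht] at h; simp only [if_neg Bool.false_ne_true]
    have := of_decide_eq_false h.symm
    omega
  · rw [ht] at h; simp only [if_pos rfl]
    exact of_decide_eq_true h.symm

lemma neg_one_pow_flip (b R : ℕ) (hb : b < 2) :
    (-1:ℝ)^(b + R) + (-1)^((1-b) + R) = 0 := by
  interval_cases b <;> simp [pow_add, pow_succ] <;> ring

lemma integral_walsh (n : ℕ) :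
    ∫ x in Set.Ico (0:ℝ) 1, walsh n x = if n = 0 then 1 else 0 := by
  by_cases h0 : n = 0
  · subst h0
    simp only [if_pos rfl]
    rw [setIntegral_congr_fun measurableSet_Ico (fun x _ => walsh_zero x)]
    simp [Real.volume_Ico]
  · rw [if_neg h0]
    set M := n + 1 with hMdef
    have hnM : n < 2^M := lt_of_lt_of_le (Nat.lt_two_pow_self (n := n))
      (Nat.pow_le_pow_right (by norm_num) (by omega))
    have key : ∀ i j : ℕ, i < j → ((i:ℝ)+1)/2^M ≤ (j:ℝ)/2^M := by
      intro i j h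
      have h2 : ((i:ℝ)+1) ≤ j := by exact_mod_cast h
      have hM : (0:ℝ) < 2^M := by positivity
      exact (div_le_div_iff_of_pos_right hM).2 h2
    have hdisj : Set.Pairwise ↑(Finset.range (2^M))
        (Function.onFun Disjoint fun j : ℕ => Set.Ico ((j:ℝ)/2^M) (((j:ℝ)+1)/2^M)) := by
      intro i _ j _ hij
      apply Set.Ico_disjoint_Ico.2
      rcases lt_or_gt_of_ne hij with h | h
      · exact le_trans (min_le_left _ _) (le_trans (key i j h) (le_max_right _ _))
      · exact le_trans (min_le_right _ _) (le_trans (key j i h) (le_max_left _ _))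
    rw [Ico_eq_biUnion M, integral_biUnion_finset _ (fun j _ => measurableSet_Ico) hdisj
      (fun j _ => integrableOn_walsh measurableSet_Ico (by simp [Real.volume_Ico]))]
    have hval : ∀ j ∈ Finset.range (2^M),
        ∫ x in Set.Ico ((j:ℝ)/2^M) (((j:ℝ)+1)/2^M), walsh n x
          = (1/2^M : ℝ) * (-1:ℝ)^(∑ k ∈ Finset.range M, eps k n * (j / 2^(M-1-k) % 2)) := by
      intro j hj
      rw [Finset.mem_range] at hj
      rw [setIntegral_congr_fun measurableSet_Ico
        (g := fun _ => (-1:ℝ)^(∑ k ∈ Finset.range M, eps k n * (j / 2^(M-1-k) % 2)))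
        (fun x hx => by
          rw [walsh_eq_sum (show n < M by omega) x]
          congr 1
          exact Finset.sum_congr rfl fun k hk => by
            rw [digit_of_mem hj (Finset.mem_range.mp hk) hx])]
      rw [setIntegral_const]
      rw [measureReal_def, Real.volume_Ico, smul_eq_mul]
      congr 1
      rw [show ((j:ℝ)+1)/2^M - (j:ℝ)/2^M = 1/2^M by ring]
      rw [ENNReal.toReal_ofReal (by positivity)]
    rw [Finset.sum_congr rfl hval, ← Finset.mul_sum]
    have hzero : (∑ j ∈ Finset.range (2^M),
        (-1:ℝ)^(∑ k ∈ Finset.range M, eps k n * (j / 2^(M-1-k) % 2))) = 0 := by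
      obtain ⟨p, hp, -⟩ := Nat.exists_most_significant_bit h0
      have hpM : p < M := by
        have h1 := Nat.ge_two_pow_of_testBit hp
        have h2 : 2^p < 2^M := lt_of_le_of_lt h1 hnM
        exact (Nat.pow_lt_pow_iff_right (by norm_num)).1 h2
      set c := M - 1 - p with hc
      have hcM : 2^c < 2^M := Nat.pow_lt_pow_right (by norm_num) (by omega)
      apply Finset.sum_involution (g := fun j _ => j ^^^ 2^c)
      · -- f j + f (j ^^^ 2^c) = 0
        intro j hj
        have hterm : ∀ k ∈ Finset.range M, k ≠ p →
            eps k n * ((j ^^^ 2^c) / 2^(M-1-k) % 2) = eps k n * (j / 2^(M-1-k) % 2) := by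
          intro k hk hkp
          rw [Finset.mem_range] at hk
          congr 1
          rw [div_pow_mod_two, div_pow_mod_two, Nat.testBit_xor,
            Nat.testBit_two_pow_of_ne (show c ≠ M-1-k by omega)]
          simp
        have hsplit : ∀ a : ℕ, (∑ k ∈ Finset.range M, eps k n * (a / 2^(M-1-k) % 2))
            = eps p n * (a / 2^(M-1-p) % 2)
            + ∑ k ∈ (Finset.range M).erase p, eps k n * (a / 2^(M-1-k) % 2) := by
          intro a
          exact (Finset.add_sum_erase _ _ (Finset.mem_range.2 hpM)).symm
        have heps : eps p n = 1 := by simp [eps, hp]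
        have hbit : (j ^^^ 2^c) / 2^(M-1-p) % 2 = 1 - j / 2^(M-1-p) % 2 := by
          rw [div_pow_mod_two, div_pow_mod_two, Nat.testBit_xor, ← hc,
            Nat.testBit_two_pow_self]
          cases h : j.testBit c <;> simp
        have hrest : ∑ k ∈ (Finset.range M).erase p, eps k n * ((j ^^^ 2^c) / 2^(M-1-k) % 2)
            = ∑ k ∈ (Finset.range M).erase p, eps k n * (j / 2^(M-1-k) % 2) :=
          Finset.sum_congr rfl fun k hk =>
            hterm k (Finset.mem_of_mem_erase hk) (Finset.ne_of_mem_erase hk)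
        rw [hsplit j, hsplit (j ^^^ 2^c), hrest, heps, hbit]
        simp only [one_mul]
        exact neg_one_pow_flip _ _ (by omega)
      · intro j hj hf
        intro hcon
        have := congrArg (fun a => a.testBit c) hcon
        simp only [Nat.testBit_xor, Nat.testBit_two_pow_self] at this
        cases h : j.testBit c <;> rw [h] at this <;> simp at this
      · intro j hj
        exact Nat.xor_xor_cancel_right _ _
      · intro j hj
        simp only [Finset.mem_range] at hj ⊢
        exact Nat.xor_lt_two_pow hj hcM
    rw [hzero, mul_zero]

lemma integral_walsh_mul (a b : ℕ) :
    ∫ x in Set.Ico (0:ℝ) 1, walsh a x * walsh b x = if a = b then 1 else 0 := by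
  rw [setIntegral_congr_fun measurableSet_Ico
    (g := walsh (a ^^^ b)) (fun x _ => walsh_mul a b x), integral_walsh]
  congr 1
  · simp only [eq_iff_iff]
    constructor
    · intro h; exact Nat.xor_eq_zero_iff.1 h
    · intro h; rw [h]; exact Nat.xor_self b

lemma testBit_two_pow_add {N k : ℕ} (hk : k < 2^N) (i : ℕ) :
    (2^N + k).testBit i = (((2^N : ℕ)).testBit i).xor (k.testBit i) := by
  rcases lt_trichotomy i N with h | h | h
  · rw [Nat.testBit_two_pow_of_ne (by omega : N ≠ i)]
    simp only [Bool.false_xor]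
    rw [Nat.testBit_eq_decide_div_mod_eq, Nat.testBit_eq_decide_div_mod_eq]
    have hNi : N - i + i = N := by omega
    have h2 : (2^N + k) / 2^i = 2^(N-i) + k / 2^i := by
      rw [show (2:ℕ)^N = 2^(N-i) * 2^i by rw [← pow_add, hNi], add_comm,
        Nat.add_mul_div_right _ _ (Nat.two_pow_pos i), add_comm]
    rw [h2]
    have h3 : 2^(N-i) % 2 = 0 := by
      have h4 : (2:ℕ)^(N-i) = 2 * 2^(N-i-1) := by
        rw [← pow_succ']; congr 1; omega
      omega
    rw [decide_eq_decide]
    omega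
  · subst h
    rw [Nat.testBit_two_pow_add_eq, Nat.testBit_two_pow_self,
      Nat.testBit_lt_two_pow hk]
    rfl
  · have h1 : 2^N + k < 2^i := by
      calc 2^N + k < 2^N + 2^N := by omega
      _ = 2^(N+1) := by rw [pow_succ]; ring
      _ ≤ 2^i := Nat.pow_le_pow_right (by norm_num) (by omega)
    rw [Nat.testBit_lt_two_pow h1, Nat.testBit_lt_two_pow (by omega : k < 2^i),
      Nat.testBit_two_pow_of_ne (by omega : N ≠ i)]
    rfl

lemma two_pow_add_eq_xor {N k : ℕ} (hk : k < 2^N) : 2^N + k = 2^N ^^^ k :=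
  Nat.eq_of_testBit_eq fun i => by
    rw [testBit_two_pow_add hk, Nat.testBit_xor]

lemma walsh_two_pow_add {N k : ℕ} (hk : k < 2^N) (x : ℝ) :
    walsh (2^N + k) x = walsh (2^N) x * walsh k x := by
  rw [walsh_mul, ← two_pow_add_eq_xor hk]

lemma D_eq_on_I {s i : ℕ} (hi : i ≤ 2^s) {x : ℝ}
    (hx : x ∈ Set.Ico (0:ℝ) (1/2^s)) : D i x = i := by
  unfold D
  rw [Finset.sum_congr rfl (fun k hk => walsh_eq_one
    (lt_of_lt_of_le (Finset.mem_range.mp hk) hi) hx)]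
  simp

lemma walsh_two_pow (m : ℕ) (x : ℝ) : walsh (2^m) x = (-1:ℝ)^(digit m x) := by
  unfold walsh
  congr 1
  rw [Finset.sum_eq_single m]
  · simp [eps, Nat.testBit_two_pow_self]
  · intro k _ hk
    rw [show eps k (2^m) = 0 by simp [eps, Nat.testBit_two_pow_of_ne (Ne.symm hk)], zero_mul]
  · intro hm
    exfalso
    exact hm (Finset.mem_range.2 (by
      have := Nat.lt_two_pow_self (n := m)
      omega))

lemma D_two_pow (N : ℕ) {x : ℝ} (hx : x ∈ Set.Ico (0:ℝ) 1) :
    D (2^N) x = if x < 1/2^N then (2^N : ℝ) else 0 := by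
  induction N with
  | zero =>
    simp only [pow_zero]
    unfold D
    simp only [Finset.range_one, Finset.sum_singleton, walsh_zero]
    rw [if_pos (by simpa using hx.2)]
  | succ m ih =>
    have hsplit : D (2^(m+1)) x = D (2^m) x * (1 + walsh (2^m) x) := by
      unfold D
      rw [show 2^(m+1) = 2^m + 2^m by rw [pow_succ]; ring, Finset.sum_range_add]
      rw [Finset.sum_congr rfl (fun l hl =>
        walsh_two_pow_add (Finset.mem_range.mp hl) x)]
      rw [← Finset.mul_sum]
      ring
    rcases lt_or_ge x (1/2^(m+1)) with h1 | h1
    · have hx2 : x < 1/2^m := by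
        have : (1:ℝ)/2^(m+1) ≤ 1/2^m := by
          apply div_le_div_of_nonneg_left (by norm_num) (by positivity)
          exact pow_le_pow_right₀ (by norm_num) (by omega)
        linarith
      have hd : digit m x = 0 := digit_eq_zero ⟨hx.1, h1⟩ (by omega)
      rw [hsplit, ih, if_pos hx2, walsh_two_pow, hd, if_pos h1]
      rw [pow_succ]; ring_nf
    · rw [if_neg (not_lt.2 h1)]
      rcases lt_or_ge x (1/2^m) with h2 | h2
      · -- 1/2^(m+1) ≤ x < 1/2^m : digit m x = 1
        have hd : digit m x = 1 := by
          have hfloor : ⌊x * 2^(m+1)⌋ = 1 := by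
            rw [Int.floor_eq_iff]
            constructor
            · push_cast
              rw [div_le_iff₀ (by positivity)] at h1
              linarith
            · push_cast
              have : x * 2^(m+1) < (1/2^m) * 2^(m+1) := by
                apply mul_lt_mul_of_pos_right h2 (by positivity)
              have h3 : (1/2^m) * (2:ℝ)^(m+1) = 2 := by
                rw [pow_succ]; field_simp
              linarith
          simp [digit, hfloor]
        rw [hsplit, walsh_two_pow, hd, ih, if_pos h2]
        norm_num
      · rw [hsplit, ih, if_neg (not_lt.2 h2), zero_mul]

/-- The counterexample function `f_N = Σ_{i=2^N}^{2^{N+1}-1} w_i`. -/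
def fN (N : ℕ) (x : ℝ) : ℝ := ∑ i ∈ Finset.Ico (2^N) (2^(N+1)), walsh i x

lemma integrable_fN (N : ℕ) : Integrable (fN N) μI := by
  unfold fN μI
  apply integrable_finset_sum
  intro i _
  exact integrableOn_walsh measurableSet_Ico (by simp [Real.volume_Ico])

lemma coeff_fN (N i : ℕ) :
    ∫ x in Set.Ico (0:ℝ) 1, fN N x * walsh i x
      = if 2^N ≤ i ∧ i < 2^(N+1) then 1 else 0 := by
  unfold fN
  simp only [Finset.sum_mul]
  rw [integral_finset_sum _ (fun l _ => by
    have : (fun x => walsh l x * walsh i x) = walsh (l ^^^ i) := funext (walsh_mul l i)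
    rw [show (fun x => walsh l x * walsh i x) = walsh (l ^^^ i) from
      funext (walsh_mul l i)]
    exact integrableOn_walsh measurableSet_Ico (by simp [Real.volume_Ico]))]
  simp only [integral_walsh_mul]
  rw [Finset.sum_ite_eq' (Finset.Ico (2^N) (2^(N+1))) i (fun _ => (1:ℝ))]
  congr 1
  simp [Finset.mem_Ico]

lemma S_fN (N M : ℕ) (x : ℝ) :
    S (fN N) M x = ∑ i ∈ Finset.Ico (2^N) (min M (2^(N+1))), walsh i x := by
  unfold S
  rw [Finset.sum_congr rfl (fun i _ => by rw [coeff_fN])]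
  simp only [ite_mul, one_mul, zero_mul]
  rw [Finset.sum_ite, Finset.sum_const, smul_zero, add_zero]
  apply Finset.sum_congr _ (fun _ _ => rfl)
  ext j
  simp only [Finset.mem_filter, Finset.mem_range, Finset.mem_Ico, lt_min_iff]
  omega

lemma S_fN_zero {N M : ℕ} (hM : M ≤ 2^N) (x : ℝ) : S (fN N) M x = 0 := by
  rw [S_fN, Finset.Ico_eq_empty (by
    rw [not_lt, min_le_iff]
    exact Or.inl hM), Finset.sum_empty]

lemma S_fN_full {N M : ℕ} (hM : 2^(N+1) ≤ M) (x : ℝ) : S (fN N) M x = fN N x := by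
  rw [S_fN, min_eq_right hM]
  rfl

lemma S_fN_mid {N s j : ℕ} (hs : s ≤ N) (hj : j ≤ 2^s) {x : ℝ}
    (hx : x ∈ Set.Ico (0:ℝ) (1/2^s)) :
    S (fN N) (2^N + j) x = (j:ℝ) * walsh (2^N) x := by
  have hsN : (2:ℕ)^s ≤ 2^N := Nat.pow_le_pow_right (by norm_num) hs
  have h2 : (2:ℕ)^(N+1) = 2^N + 2^N := by rw [pow_succ]; ring
  rw [S_fN, min_eq_left (by omega)]
  rw [Finset.sum_Ico_eq_sum_range]
  have hsub : 2^N + j - 2^N = j := by omega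
  rw [hsub]
  rw [Finset.sum_congr rfl (fun l hl => by
    have hl2 : l < 2^N := by
      have := Finset.mem_range.mp hl; omega
    rw [walsh_two_pow_add hl2 x,
      walsh_eq_one (show l < 2^s by have := Finset.mem_range.mp hl; omega) hx, mul_one])]
  rw [Finset.sum_const, nsmul_eq_mul, Finset.card_range]

lemma fN_eq (N : ℕ) (x : ℝ) : fN N x = walsh (2^N) x * D (2^N) x := by
  unfold fN D
  rw [Finset.sum_Ico_eq_sum_range]
  have hsub : 2^(N+1) - 2^N = 2^N := by
    have h : 0 < 2^N := Nat.two_pow_pos N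
    rw [pow_succ, mul_two]; omega
  rw [hsub, Finset.sum_congr rfl (fun l hl =>
    walsh_two_pow_add (Finset.mem_range.mp hl) x), ← Finset.mul_sum]

lemma abs_fN {N : ℕ} {x : ℝ} (hx : x ∈ Set.Ico (0:ℝ) 1) :
    |fN N x| = if x < 1/2^N then (2^N : ℝ) else 0 := by
  rw [fN_eq, abs_mul, abs_walsh, one_mul, D_two_pow N hx]
  split
  · rw [abs_of_nonneg (by positivity)]
  · rw [abs_zero]

lemma maxS_fN_le (N : ℕ) (x : ℝ) :
    maxS (fN N) x ≤ ENNReal.ofReal |fN N x| := by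
  unfold maxS
  apply iSup_le
  intro m
  rcases le_or_gt (2^m) (2^N) with h | h
  · rw [S_fN_zero h x]
    simp
  · have hm : 2^(N+1) ≤ 2^m := by
      have hNm : N < m := by
        by_contra hc
        exact absurd (Nat.pow_le_pow_right (by norm_num : 1 ≤ 2) (not_lt.1 hc)) (not_le.2 h)
      exact Nat.pow_le_pow_right (by norm_num) (by omega)
    rw [S_fN_full hm x]

-- Q lemmas
section Qlemmas
variable {q : ℕ → ℝ} (hq_anti : Antitone q) (hq_pos : ∀ k, 0 < q k)

include hq_pos in
lemma Q_pos {n : ℕ} (hn : 1 ≤ n) : 0 < Q q n := by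
  unfold Q
  apply Finset.sum_pos (fun k _ => hq_pos k)
  exact Finset.nonempty_range_iff.2 (by omega)

include hq_pos in
lemma Q_mono {n m : ℕ} (h : n ≤ m) : Q q n ≤ Q q m := by
  unfold Q
  apply Finset.sum_le_sum_of_subset_of_nonneg
  · exact Finset.range_subset_range.2 h
  · exact fun k _ _ => (hq_pos k).le

include hq_anti in
lemma Q_doubling (m : ℕ) : Q q (2*m) ≤ 2 * Q q m := by
  unfold Q
  rw [two_mul, Finset.sum_range_add]
  have : ∑ l ∈ Finset.range m, q (m + l) ≤ ∑ l ∈ Finset.range m, q l :=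
    Finset.sum_le_sum (fun l _ => hq_anti (by omega))
  linarith

include hq_anti in
lemma Q_pow_le (a b : ℕ) : Q q (2^(a+b)) ≤ 2^b * Q q (2^a) := by
  induction b with
  | zero => simp
  | succ c ih =>
    have h1 : (2:ℕ)^(a+(c+1)) = 2 * 2^(a+c) := by ring
    calc Q q (2^(a+(c+1))) = Q q (2 * 2^(a+c)) := by rw [h1]
    _ ≤ 2 * Q q (2^(a+c)) := Q_doubling hq_anti _
    _ ≤ 2 * (2^c * Q q (2^a)) := by linarith
    _ = 2^(c+1) * Q q (2^a) := by ring

include hq_pos in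
lemma sum_q_mul_lower (h : ℕ) (h1 : 1 ≤ h) :
    (h:ℝ) * Q q h ≤ ∑ j ∈ Finset.Icc 1 (2*h), q (2*h - j) * j := by
  have hsub : Finset.Icc (h+1) (2*h) ⊆ Finset.Icc 1 (2*h) := by
    apply Finset.Icc_subset_Icc (by omega) le_rfl
  have step1 : ∑ j ∈ Finset.Icc (h+1) (2*h), q (2*h - j) * j
      ≤ ∑ j ∈ Finset.Icc 1 (2*h), q (2*h - j) * j := by
    apply Finset.sum_le_sum_of_subset_of_nonneg hsub
    intro j _ _
    exact mul_nonneg (hq_pos _).le (by positivity)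
  have step2 : ∑ j ∈ Finset.Icc (h+1) (2*h), q (2*h - j) * (h:ℝ)
      ≤ ∑ j ∈ Finset.Icc (h+1) (2*h), q (2*h - j) * j := by
    apply Finset.sum_le_sum
    intro j hj
    have hjh : (h:ℝ) ≤ j := by
      have := (Finset.mem_Icc.mp hj).1
      exact_mod_cast (by omega : h ≤ j)
    exact mul_le_mul_of_nonneg_left hjh (hq_pos _).le
  have step3 : ∑ j ∈ Finset.Icc (h+1) (2*h), q (2*h - j) * (h:ℝ)
      = (h:ℝ) * Q q h := by
    rw [← Finset.sum_mul]
    rw [mul_comm]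
    congr 1
    unfold Q
    apply Finset.sum_nbij' (i := fun j => 2*h - j) (j := fun l => 2*h - l)
    · intro a ha
      simp only [Finset.mem_Icc] at ha
      simp only [Finset.mem_range]
      omega
    · intro a ha
      simp only [Finset.mem_range] at ha
      simp only [Finset.mem_Icc]
      omega
    · intro a ha
      simp only [Finset.mem_Icc] at ha
      omega
    · intro a ha
      simp only [Finset.mem_range] at ha
      omega
    · intro a _
      rfl
  linarith
end Qlemmas

section Main
variable {q : ℕ → ℝ} (hq_anti : Antitone q) (hq_pos : ∀ k, 0 < q k)

include hq_anti hq_pos in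
lemma t_fN_abs {N s : ℕ} (hs1 : 1 ≤ s) (hsN : s ≤ N) {x : ℝ}
    (hx : x ∈ Set.Ico (0:ℝ) (1/2^s)) :
    (2:ℝ)^(2*s) / 2^(N+3) ≤ |t q (2^N + 2^s) (fN N) x| := by
  set m := 2^s with hm
  set n := 2^N + 2^s with hn
  have hm1 : 1 ≤ m := Nat.one_le_two_pow
  have hmN : m ≤ 2^N := Nat.pow_le_pow_right (by norm_num) hsN
  have hQn : 0 < Q q n := Q_pos hq_pos (by omega)
  -- step 1: restrict the sum
  have hA : ∑ k ∈ Finset.Icc 1 n, q (n-k) * S (fN N) k x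
      = ∑ k ∈ Finset.Icc (2^N+1) n, q (n-k) * S (fN N) k x := by
    symm
    apply Finset.sum_subset
    · apply Finset.Icc_subset_Icc (by omega) le_rfl
    · intro k hk hk2
      simp only [Finset.mem_Icc] at hk hk2
      rw [S_fN_zero (by omega) x, mul_zero]
  -- step 2: reindex and evaluate S
  have hB : ∑ k ∈ Finset.Icc (2^N+1) n, q (n-k) * S (fN N) k x
      = (∑ j ∈ Finset.Icc 1 m, q (m-j) * (j:ℝ)) * walsh (2^N) x := by
    rw [Finset.sum_mul]
    apply Finset.sum_nbij' (i := fun k => k - 2^N) (j := fun j => 2^N + j)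
    · intro a ha
      simp only [Finset.mem_Icc] at ha ⊢
      omega
    · intro a ha
      simp only [Finset.mem_Icc] at ha ⊢
      omega
    · intro a ha
      simp only [Finset.mem_Icc] at ha
      omega
    · intro a ha
      simp only [Finset.mem_Icc] at ha
      omega
    · intro k hk
      simp only [Finset.mem_Icc] at hk
      have hk1 : k = 2^N + (k - 2^N) := by omega
      have hjm : k - 2^N ≤ 2^s := by omega
      have hS : S (fN N) k x = ((k - 2^N : ℕ):ℝ) * walsh (2^N) x := by
        conv_lhs => rw [hk1]
        exact S_fN_mid hsN hjm hx
      rw [hS, show n - k = m - (k - 2^N) by omega]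
      ring
  -- step 3: the sum lower bound
  set hh := 2^(s-1) with hhh
  have hhm : m = 2 * hh := by
    rw [hhh, hm, ← pow_succ']
    congr 1
    omega
  have hh1 : 1 ≤ hh := Nat.one_le_two_pow
  have hlow : (hh:ℝ) * Q q hh ≤ ∑ j ∈ Finset.Icc 1 m, q (m-j) * (j:ℝ) := by
    rw [hhm]
    exact sum_q_mul_lower hq_pos hh hh1
  have hQh : 0 < Q q hh := Q_pos hq_pos hh1
  -- step 4: upper bound for Q n
  have hup : Q q n ≤ 2^(N+2-s) * Q q hh := by
    have h1 : Q q n ≤ Q q (2^(N+1)) := Q_mono hq_pos (by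
      rw [hn, pow_succ, mul_two]; omega)
    have h2 := Q_pow_le hq_anti (s-1) (N+2-s)
    rw [show (s-1) + (N+2-s) = N+1 by omega] at h2
    exact le_trans h1 h2
  -- assemble
  have hsum_nonneg : (0:ℝ) ≤ ∑ j ∈ Finset.Icc 1 m, q (m-j) * (j:ℝ) := by
    apply Finset.sum_nonneg
    intro j _
    exact mul_nonneg (hq_pos _).le (by positivity)
  have ht : |t q n (fN N) x|
      = (∑ j ∈ Finset.Icc 1 m, q (m-j) * (j:ℝ)) / Q q n := by
    unfold t
    rw [hA, hB, abs_mul, abs_mul, abs_walsh, mul_one, abs_of_nonneg hsum_nonneg,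
      abs_of_nonneg (by positivity : (0:ℝ) ≤ 1 / Q q n)]
    ring
  rw [ht]
  have hchain : ((hh:ℝ) * Q q hh) / (2^(N+2-s) * Q q hh)
      ≤ (∑ j ∈ Finset.Icc 1 m, q (m-j) * (j:ℝ)) / Q q n := by
    apply div_le_div₀ hsum_nonneg hlow hQn hup
  refine le_trans ?_ hchain
  rw [mul_div_mul_right _ _ (ne_of_gt hQh)]
  rw [div_le_div_iff₀ (by positivity) (by positivity)]
  have hcast : (hh:ℝ) = 2^(s-1) := by
    rw [hhh]; push_cast; ring
  rw [hcast, ← pow_add, ← pow_add]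
  apply le_of_eq
  congr 1
  omega

end Main

lemma ofReal_two_pow (N : ℕ) : ENNReal.ofReal ((2:ℝ)^N) = (2:ℝ≥0∞)^(N:ℝ) := by
  rw [ENNReal.ofReal_pow (by norm_num : (0:ℝ) ≤ 2), ← ENNReal.rpow_natCast]
  norm_num

lemma ofReal_inv_two_pow (N : ℕ) :
    ENNReal.ofReal ((1:ℝ)/2^N) = (2:ℝ≥0∞)^(-(N:ℝ)) := by
  rw [one_div, ENNReal.ofReal_inv_of_pos (by positivity), ofReal_two_pow,
    ← ENNReal.rpow_neg]

lemma HpNorm_fN_le (N : ℕ) : HpNorm (1/2) (fN N) ≤ (2:ℝ≥0∞)^(-(N:ℝ)) := by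
  unfold HpNorm
  have hexp : (1:ℝ)/(1/2) = 2 := by norm_num
  rw [hexp]
  have hmono : (∫⁻ x in Set.Ico (0:ℝ) 1, maxS (fN N) x ^ (1/2 : ℝ))
      ≤ ∫⁻ x in Set.Ico (0:ℝ) 1, (ENNReal.ofReal |fN N x|) ^ (1/2:ℝ) :=
    lintegral_mono fun x => ENNReal.rpow_le_rpow (maxS_fN_le N x) (by norm_num)
  have hval : (∫⁻ x in Set.Ico (0:ℝ) 1, (ENNReal.ofReal |fN N x|) ^ (1/2:ℝ))
      = (ENNReal.ofReal ((2:ℝ)^N))^(1/2:ℝ) * ENNReal.ofReal ((1:ℝ)/2^N) := by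
    have hle1 : (1:ℝ)/2^N ≤ 1 := by
      rw [div_le_one (by positivity)]
      exact one_le_pow₀ (by norm_num)
    have hsplit : Set.Ico (0:ℝ) 1 = Set.Ico (0:ℝ) (1/2^N) ∪ Set.Ico (1/2^N) 1 := by
      rw [Set.Ico_union_Ico_eq_Ico (by positivity) hle1]
    rw [hsplit, lintegral_union measurableSet_Ico (Set.Ico_disjoint_Ico_same)]
    have h1 : (∫⁻ x in Set.Ico (0:ℝ) (1/2^N), (ENNReal.ofReal |fN N x|) ^ (1/2:ℝ))
        = (ENNReal.ofReal ((2:ℝ)^N))^(1/2:ℝ) * ENNReal.ofReal ((1:ℝ)/2^N) := by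
      rw [setLIntegral_congr_fun measurableSet_Ico
        (g := fun _ => (ENNReal.ofReal ((2:ℝ)^N))^(1/2:ℝ))
        (by
          intro x hx
          dsimp only
          have hx01 : x ∈ Set.Ico (0:ℝ) 1 := ⟨hx.1, lt_of_lt_of_le hx.2 hle1⟩
          rw [abs_fN hx01, if_pos hx.2])]
      rw [setLIntegral_const, Real.volume_Ico, sub_zero]
    have h2 : (∫⁻ x in Set.Ico ((1:ℝ)/2^N) 1, (ENNReal.ofReal |fN N x|) ^ (1/2:ℝ)) = 0 := by
      rw [setLIntegral_congr_fun measurableSet_Ico (g := fun _ => (0:ℝ≥0∞))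
        (by
          intro x hx
          dsimp only
          have hx01 : x ∈ Set.Ico (0:ℝ) 1 := ⟨le_trans (by positivity) hx.1, hx.2⟩
          rw [abs_fN hx01, if_neg (not_lt.2 hx.1), ENNReal.ofReal_zero,
            ENNReal.zero_rpow_of_pos (by norm_num)])]
      simp
    rw [h1, h2, add_zero]
  calc (∫⁻ x in Set.Ico (0:ℝ) 1, maxS (fN N) x ^ (1/2 : ℝ)) ^ (2:ℝ)
      ≤ ((ENNReal.ofReal ((2:ℝ)^N))^(1/2:ℝ) * ENNReal.ofReal ((1:ℝ)/2^N)) ^ (2:ℝ) := by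
        rw [← hval]
        exact ENNReal.rpow_le_rpow hmono (by norm_num)
    _ = (2:ℝ≥0∞)^(-(N:ℝ)) := by
        rw [ofReal_two_pow, ofReal_inv_two_pow, ← ENNReal.rpow_mul,
          ← ENNReal.rpow_add _ _ (by norm_num) (by norm_num),
          ← ENNReal.rpow_mul]
        congr 1
        ring

section Main2
variable {q : ℕ → ℝ} (hq_anti : Antitone q) (hq_pos : ∀ k, 0 < q k)

include hq_anti hq_pos in
lemma tstar_lower {N s : ℕ} (hs1 : 1 ≤ s) (hsN : s ≤ N) {x : ℝ}
    (hx : x ∈ Set.Ico ((1:ℝ)/2^(s+1)) (1/2^s)) :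
    ENNReal.ofReal ((2:ℝ)^(2*s)/2^(N+3)) ≤ tstar q (fN N) x := by
  have hx2 : x ∈ Set.Ico (0:ℝ) (1/2^s) := ⟨le_trans (by positivity) hx.1, hx.2⟩
  have h1 := t_fN_abs hq_anti hq_pos hs1 hsN hx2
  calc ENNReal.ofReal ((2:ℝ)^(2*s)/2^(N+3))
      ≤ ENNReal.ofReal |t q (2^N+2^s) (fN N) x| := ENNReal.ofReal_le_ofReal h1
    _ ≤ tstar q (fN N) x := by
        unfold tstar
        exact le_biSup (fun n => ENNReal.ofReal |t q n (fN N) x|) (Set.mem_Ici.mpr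
          (le_trans (Nat.one_le_two_pow (n := N)) (Nat.le_add_right _ _)))

lemma rpow_half_sq {a : ℝ} (ha : 0 < a) : (a ^ ((1:ℝ)/2)) ^ 2 = a := by
  rw [← Real.rpow_natCast (a ^ ((1:ℝ)/2)) 2, ← Real.rpow_mul ha.le]
  norm_num

include hq_anti hq_pos in
lemma lintegral_tstar_lower (N : ℕ) :
    (N:ℝ≥0∞) * ENNReal.ofReal (1/(2*((2:ℝ)^(N+3))^((1:ℝ)/2)))
      ≤ ∫⁻ x in Set.Ico (0:ℝ) 1, tstar q (fN N) x ^ ((1:ℝ)/2) := by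
  set β := ((2:ℝ)^(N+3))^((1:ℝ)/2) with hβ
  have hβpos : 0 < β := Real.rpow_pos_of_pos (by positivity) _
  have hmono : ∀ a b : ℕ, a ≤ b → (1:ℝ)/2^b ≤ 1/2^a := by
    intro a b hab
    apply div_le_div_of_nonneg_left (by norm_num) (by positivity)
    exact pow_le_pow_right₀ (by norm_num) hab
  have hreal : ∀ s : ℕ, ((2:ℝ)^(2*s)/2^(N+3)) ^ ((1:ℝ)/2) = 2^s/β := by
    intro s
    rw [Real.div_rpow (by positivity) (by positivity)]
    congr 1
    rw [show (2:ℝ)^(2*s) = ((2:ℝ)^s)^(2:ℕ) by rw [← pow_mul, mul_comm]]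
    rw [← Real.rpow_natCast ((2:ℝ)^s) 2, ← Real.rpow_mul (by positivity)]
    norm_num
  have hpt : ∀ x : ℝ, (∑ s ∈ Finset.Icc 1 N, Set.indicator
        (Set.Ico ((1:ℝ)/2^(s+1)) (1/2^s))
        (fun _ => ENNReal.ofReal ((2:ℝ)^s/β)) x)
      ≤ tstar q (fN N) x ^ ((1:ℝ)/2) := by
    intro x
    by_cases hex : ∃ s₀, s₀ ∈ Finset.Icc 1 N ∧ x ∈ Set.Ico ((1:ℝ)/2^(s₀+1)) (1/2^s₀)
    · obtain ⟨s₀, hs₀, hxs⟩ := hex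
      have hs₀' := Finset.mem_Icc.mp hs₀
      rw [Finset.sum_eq_single s₀ (fun s hs hne => by
          apply Set.indicator_of_notMem
          intro hmem
          rcases lt_or_gt_of_ne hne with h | h
          · exact absurd (lt_of_lt_of_le hxs.2 (hmono _ _ (by omega : s+1 ≤ s₀)))
              (not_lt.2 hmem.1)
          · exact absurd (lt_of_lt_of_le hmem.2 (hmono _ _ (by omega : s₀+1 ≤ s)))
              (not_lt.2 hxs.1))
        (fun hns => absurd hs₀ hns)]
      rw [Set.indicator_of_mem hxs]
      have h1 := tstar_lower hq_anti hq_pos hs₀'.1 hs₀'.2 hxs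
      calc ENNReal.ofReal ((2:ℝ)^s₀/β)
          = (ENNReal.ofReal ((2:ℝ)^(2*s₀)/2^(N+3))) ^ ((1:ℝ)/2) := by
            rw [ENNReal.ofReal_rpow_of_pos (by positivity), hreal s₀]
        _ ≤ tstar q (fN N) x ^ ((1:ℝ)/2) := ENNReal.rpow_le_rpow h1 (by norm_num)
    · push_neg at hex
      rw [Finset.sum_eq_zero (fun s hs => Set.indicator_of_notMem (hex s hs) _)]
      exact bot_le
  have hterm : ∀ s : ℕ, ENNReal.ofReal ((2:ℝ)^s/β) * ENNReal.ofReal ((1:ℝ)/2^(s+1))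
      = ENNReal.ofReal (1/(2*β)) := by
    intro s
    rw [← ENNReal.ofReal_mul (by positivity)]
    congr 1
    rw [pow_succ]
    field_simp
  have hint : ∀ s : ℕ, (∫⁻ x in Set.Ico (0:ℝ) 1, Set.indicator
        (Set.Ico ((1:ℝ)/2^(s+1)) (1/2^s))
        (fun _ => ENNReal.ofReal ((2:ℝ)^s/β)) x)
      = ENNReal.ofReal ((2:ℝ)^s/β) * ENNReal.ofReal ((1:ℝ)/2^(s+1)) := by
    intro s
    rw [lintegral_indicator measurableSet_Ico, setLIntegral_const,
      Measure.restrict_apply measurableSet_Ico]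
    have hsub : Set.Ico ((1:ℝ)/2^(s+1)) (1/2^s) ∩ Set.Ico (0:ℝ) 1
        = Set.Ico ((1:ℝ)/2^(s+1)) (1/2^s) := by
      apply Set.inter_eq_self_of_subset_left
      intro y hy
      constructor
      · exact le_trans (by positivity) hy.1
      · calc y < 1/2^s := hy.2
          _ ≤ 1/2^0 := hmono 0 s (by omega)
          _ = 1 := by norm_num
    rw [hsub, Real.volume_Ico]
    congr 2
    rw [pow_succ]
    field_simp
    ring
  calc (N:ℝ≥0∞) * ENNReal.ofReal (1/(2*β))
      = ∑ _s ∈ Finset.Icc 1 N, ENNReal.ofReal (1/(2*β)) := by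
        rw [Finset.sum_const, Nat.card_Icc]
        simp [nsmul_eq_mul]
    _ = ∑ s ∈ Finset.Icc 1 N, ENNReal.ofReal ((2:ℝ)^s/β)
          * ENNReal.ofReal ((1:ℝ)/2^(s+1)) :=
        Finset.sum_congr rfl (fun s _ => (hterm s).symm)
    _ = ∑ s ∈ Finset.Icc 1 N, ∫⁻ x in Set.Ico (0:ℝ) 1, Set.indicator
          (Set.Ico ((1:ℝ)/2^(s+1)) (1/2^s))
          (fun _ => ENNReal.ofReal ((2:ℝ)^s/β)) x :=
        Finset.sum_congr rfl (fun s _ => (hint s).symm)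
    _ ≤ ∫⁻ x in Set.Ico (0:ℝ) 1, tstar q (fN N) x ^ ((1:ℝ)/2) := by
        rw [← lintegral_finset_sum _ (fun s _ =>
          (measurable_const.indicator measurableSet_Ico))]
        exact lintegral_mono hpt
end Main2
end WalshAux

/-- for non-increasing positive weights the maximal Nörlund operator
is never bounded from `H_{1/2}[0,1)` to `L^{1/2}[0,1)`. -/
theorem norlund_maximal_not_bounded_H_half
    (q : ℕ → ℝ) (hq_anti : Antitone q) (hq_pos : ∀ k, 0 < q k) :
    ¬ ∃ C : ℝ≥0, ∀ f : ℝ → ℝ, MeasureTheory.Integrable f Walsh.μI →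
        Walsh.HpNorm (1/2) f < ⊤ →
        Walsh.LpNormE (1/2) (Walsh.tstar q f) ≤ (C : ℝ≥0∞) * Walsh.HpNorm (1/2) f := by
  rintro ⟨C, hC⟩
  open WalshAux in
  set N : ℕ := 6 * (Nat.ceil (C:ℝ) + 1) with hNdef
  have hceil : (C:ℝ) ≤ Nat.ceil (C:ℝ) := Nat.le_ceil _
  have hCnn : (0:ℝ) ≤ (C:ℝ) := C.coe_nonneg
  have hcnn : (0:ℝ) ≤ (Nat.ceil (C:ℝ) : ℝ) := Nat.cast_nonneg _
  have hNcast : (N:ℝ) = 6 * ((Nat.ceil (C:ℝ) : ℝ) + 1) := by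
    rw [hNdef]; push_cast; ring
  have hlt : 32*(C:ℝ) < (N:ℝ)^2 := by
    rw [hNcast]
    nlinarith [hceil, hcnn, sq_nonneg ((Nat.ceil (C:ℝ) : ℝ))]
  -- apply the hypothesis to f_N
  have hfin : Walsh.HpNorm (1/2) (WalshAux.fN N) < ⊤ := by
    apply lt_of_le_of_lt (WalshAux.HpNorm_fN_le N)
    rw [ENNReal.rpow_neg]
    exact ENNReal.inv_lt_top.2 (ENNReal.rpow_pos (by norm_num) (by norm_num))
  have h1 := hC (WalshAux.fN N) (WalshAux.integrable_fN N) hfin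
  have h2 : Walsh.LpNormE (1/2) (Walsh.tstar q (WalshAux.fN N))
      ≤ (C : ℝ≥0∞) * ENNReal.ofReal ((1:ℝ)/2^N) := by
    refine le_trans h1 (mul_le_mul' le_rfl ?_)
    rw [WalshAux.ofReal_inv_two_pow]
    exact WalshAux.HpNorm_fN_le N
  -- lower bound
  set β := ((2:ℝ)^(N+3))^((1:ℝ)/2) with hβ
  have hβpos : 0 < β := Real.rpow_pos_of_pos (by positivity) _
  have h3 : ((N:ℝ≥0∞) * ENNReal.ofReal (1/(2*β)))^(2:ℝ)
      ≤ Walsh.LpNormE (1/2) (Walsh.tstar q (WalshAux.fN N)) := by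
    unfold Walsh.LpNormE
    rw [show (1:ℝ)/(1/2) = 2 by norm_num]
    exact ENNReal.rpow_le_rpow (WalshAux.lintegral_tstar_lower hq_anti hq_pos N)
      (by norm_num)
  have hb : (1/(2*β))^(2:ℕ) = (1:ℝ)/2^(N+5) := by
    have h2b : β^(2:ℕ) = 2^(N+3) := WalshAux.rpow_half_sq (by positivity)
    have hp : (2:ℝ)^(2:ℕ) * 2^(N+3) = 2^(N+5) := by
      rw [← pow_add]; congr 1; omega
    rw [div_pow, one_pow, mul_pow, h2b, hp]
  have h4 : ((N:ℝ≥0∞) * ENNReal.ofReal (1/(2*β)))^(2:ℝ)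
      = (N:ℝ≥0∞)^(2:ℝ) * ENNReal.ofReal ((1:ℝ)/2^(N+5)) := by
    rw [ENNReal.mul_rpow_of_nonneg _ _ (by norm_num)]
    congr 1
    rw [ENNReal.ofReal_rpow_of_pos (by positivity)]
    congr 1
    rw [show ((1:ℝ)/(2*β))^(2:ℝ) = (1/(2*β))^(2:ℕ) by
      rw [← Real.rpow_natCast (1/(2*β)) 2]; norm_num]
    exact hb
  have h5 : (N:ℝ≥0∞)^(2:ℝ) * ENNReal.ofReal ((1:ℝ)/32) * ENNReal.ofReal ((1:ℝ)/2^N)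
      ≤ (C : ℝ≥0∞) * ENNReal.ofReal ((1:ℝ)/2^N) := by
    have e1 : ENNReal.ofReal ((1:ℝ)/2^(N+5))
        = ENNReal.ofReal ((1:ℝ)/32) * ENNReal.ofReal ((1:ℝ)/2^N) := by
      rw [← ENNReal.ofReal_mul (by norm_num)]
      congr 1
      rw [pow_add]
      norm_num
    calc (N:ℝ≥0∞)^(2:ℝ) * ENNReal.ofReal ((1:ℝ)/32) * ENNReal.ofReal ((1:ℝ)/2^N)
        = (N:ℝ≥0∞)^(2:ℝ) * ENNReal.ofReal ((1:ℝ)/2^(N+5)) := by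
          rw [e1, mul_assoc]
      _ = ((N:ℝ≥0∞) * ENNReal.ofReal (1/(2*β)))^(2:ℝ) := h4.symm
      _ ≤ Walsh.LpNormE (1/2) (Walsh.tstar q (WalshAux.fN N)) := h3
      _ ≤ (C : ℝ≥0∞) * ENNReal.ofReal ((1:ℝ)/2^N) := h2
  have h6 : (N:ℝ≥0∞)^(2:ℝ) * ENNReal.ofReal ((1:ℝ)/32) ≤ (C : ℝ≥0∞) := by
    rw [← ENNReal.mul_le_mul_iff_left (c := ENNReal.ofReal ((1:ℝ)/2^N))
      (by simp [ENNReal.ofReal_eq_zero]) ENNReal.ofReal_ne_top]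
    exact h5
  have h7 := ENNReal.toReal_mono ENNReal.coe_ne_top h6
  rw [ENNReal.toReal_mul, ENNReal.coe_toReal, ← ENNReal.toReal_rpow,
    ENNReal.toReal_ofReal (by norm_num)] at h7
  simp only [ENNReal.toReal_natCast] at h7
  rw [show ((N:ℝ))^(2:ℝ) = (N:ℝ)^(2:ℕ) by
    rw [← Real.rpow_natCast ((N:ℝ)) 2]; norm_num] at h7
  nlinarith [h7, hlt]
end
end

section
/- Let {q_k}_{k≥0} be a non-increasing sequence of positive reals and let p ∈ (0, 1]. For n ≥ 1 with binary decomposition n = 2^{n_1} + ⋯ + 2^{n_r}, n_1 > ⋯ > n_r ≥ 0, set n^{(0)} := n, n^{(j)} := n^{(j−1)} − 2^{n_j}, and F_{n,1} := (w_n/Q_n) Σ_{j=1}^{r} Q_{n^{(j−1)}} w_{2^{n_j}} D_{2^{n_j}}. Then there is a constant c_p such that for every N ∈ ℕ: ∫_{[0,1)\I_N} ( sup_{n>2^N} 2^{N/p} ∫_{I_N} |F_{n,1}(x ∔ t)| dt )^p dx ≤ c_p · 2^{N(1−p)} Q_{2^N}^{−p} Σ_{j=1}^{N} Q_{2^j}^{p}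 2^{j(p−1)}. -/
open MeasureTheory Filter
open scoped ENNReal NNReal

noncomputable section

section Aux

open Walsh Finset

lemma digit_le_one (k : ℕ) (x : ℝ) : digit k x ≤ 1 :=
  Nat.lt_succ_iff.mp (Nat.mod_lt _ two_pos)

lemma digit_eq_or (k : ℕ) (x : ℝ) : digit k x = 0 ∨ digit k x = 1 :=
  Nat.mod_two_eq_zero_or_one _

lemma eps_eq_zero_of_lt {n k : ℕ} (h : n < 2 ^ k) : eps k n = 0 := by
  simp [eps, Nat.testBit_lt_two_pow h]

lemma sum_eps_stable (n : ℕ) (x : ℝ) {M₁ M₂ : ℕ} (h : M₁ ≤ M₂) (hn : n < 2 ^ M₁) :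
    (∑ k ∈ Finset.range M₂, eps k n * digit k x)
      = ∑ k ∈ Finset.range M₁, eps k n * digit k x := by
  refine (Finset.sum_subset (Finset.range_subset_range.2 h) ?_).symm
  intro k _ hk
  have hk' : M₁ ≤ k := by simpa using hk
  have : n < 2 ^ k := lt_of_lt_of_le hn (Nat.pow_le_pow_right (by norm_num) hk')
  simp [eps_eq_zero_of_lt this]

lemma walsh_eq_sum {n m : ℕ} (hm : n < 2 ^ m) (x : ℝ) :
    walsh n x = (-1 : ℝ) ^ (∑ k ∈ Finset.range m, eps k n * digit k x) := by
  have hn1 : n < 2 ^ (n + 1) := lt_of_lt_of_le (Nat.lt_two_pow_self (n := n))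
    (Nat.pow_le_pow_right (by norm_num) (Nat.le_succ n))
  rcases le_total m (n + 1) with h | h
  · rw [walsh, sum_eps_stable n x h hm]
  · rw [walsh, sum_eps_stable n x h hn1]

lemma walsh_eq_prod {n m : ℕ} (hm : n < 2 ^ m) (x : ℝ) :
    walsh n x = ∏ k ∈ Finset.range m, (-1 : ℝ) ^ (eps k n * digit k x) := by
  rw [walsh_eq_sum hm x, ← Finset.prod_pow_eq_pow_sum]

lemma walsh_zero (x : ℝ) : walsh 0 x = 1 := by
  have : ∀ k, eps k 0 = 0 := fun k => by simp [eps]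
  simp [walsh, this]

lemma walsh_two_pow (i : ℕ) (x : ℝ) : walsh (2 ^ i) x = (-1 : ℝ) ^ digit i x := by
  have h : (2 : ℕ) ^ i < 2 ^ (i + 1) := by
    exact Nat.pow_lt_pow_right (by norm_num) (Nat.lt_succ_self i)
  rw [walsh_eq_prod h x]
  have heps : ∀ k, eps k (2 ^ i) = if k = i then 1 else 0 := by
    intro k
    simp [eps, Nat.testBit_two_pow, eq_comm]
  rw [Finset.prod_eq_single i]
  · simp [heps]
  · intro k _ hk; simp [heps, hk]
  · intro h'; exact absurd (Finset.self_mem_range_succ i) h'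

lemma walsh_two_pow_add {i k : ℕ} (hk : k < 2 ^ i) (x : ℝ) :
    walsh (2 ^ i + k) x = walsh (2 ^ i) x * walsh k x := by
  have h2 : (2:ℕ) ^ i < 2 ^ (i + 1) := Nat.pow_lt_pow_right (by norm_num) (Nat.lt_succ_self i)
  have h1 : 2 ^ i + k < 2 ^ (i + 1) := by
    have : (2:ℕ) ^ (i + 1) = 2 ^ i + 2 ^ i := by ring
    omega
  have h3 : k < 2 ^ (i + 1) := lt_trans hk h2
  rw [walsh_eq_prod h1 x, walsh_eq_prod h2 x, walsh_eq_prod h3 x, ← Finset.prod_mul_distrib]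
  refine Finset.prod_congr rfl fun s hs => ?_
  have hs' : s < i + 1 := Finset.mem_range.mp hs
  have heq : eps s (2 ^ i + k) = eps s (2 ^ i) + eps s k := by
    rcases lt_or_eq_of_le (Nat.lt_succ_iff.mp hs') with h | h
    · have := Nat.testBit_two_pow_add_gt h k
      simp [eps, this, Nat.testBit_two_pow]
      omega
    · subst h
      have h4 : k.testBit s = false := Nat.testBit_lt_two_pow hk
      have := Nat.testBit_two_pow_add_eq k s
      simp [eps, this, h4, Nat.testBit_two_pow]
  rw [heq, add_mul, pow_add]

lemma D_two_pow (i : ℕ) (x : ℝ) :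
    D (2 ^ i) x = ∏ s ∈ Finset.range i, (1 + (-1 : ℝ) ^ digit s x) := by
  induction i with
  | zero => simp [D, walsh_zero]
  | succ i ih =>
    have h : (2:ℕ) ^ (i + 1) = 2 ^ i + 2 ^ i := by ring
    rw [D, h, Finset.sum_range_add]
    have : ∀ k ∈ Finset.range (2 ^ i), walsh (2 ^ i + k) x = walsh (2 ^ i) x * walsh k x :=
      fun k hk => walsh_two_pow_add (Finset.mem_range.mp hk) x
    rw [Finset.sum_congr rfl this, ← Finset.mul_sum]
    have hD : ∑ k ∈ Finset.range (2 ^ i), walsh k x = D (2 ^ i) x := rfl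
    rw [hD, ih, Finset.prod_range_succ, walsh_two_pow]
    ring

lemma D_two_pow_eq_zero {i : ℕ} {x : ℝ} (h : ∃ s, s < i ∧ digit s x = 1) :
    D (2 ^ i) x = 0 := by
  obtain ⟨s, hs, hd⟩ := h
  rw [D_two_pow]
  refine Finset.prod_eq_zero (Finset.mem_range.mpr hs) ?_
  rw [hd]; ring

lemma abs_walsh (n : ℕ) (x : ℝ) : |walsh n x| = 1 := by
  rw [walsh, abs_pow, abs_neg, abs_one, one_pow]

lemma abs_D_le (n : ℕ) (x : ℝ) : |D n x| ≤ n := by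
  calc |D n x| ≤ ∑ k ∈ Finset.range n, |walsh k x| := Finset.abs_sum_le_sum_abs _ _
    _ = n := by simp [abs_walsh]

lemma digit_floor_pos {k : ℕ} {x : ℝ} (h0 : 0 ≤ x) :
    (digit k x : ℤ) = ⌊x * 2 ^ (k + 1)⌋ % 2 := by
  have hf : (0:ℤ) ≤ ⌊x * 2 ^ (k + 1)⌋ := Int.floor_nonneg.mpr (by positivity)
  rw [Walsh.digit]
  omega

lemma lt_of_digits_eq_zero {x : ℝ} (h0 : 0 ≤ x) (h1 : x < 1) :
    ∀ i : ℕ, (∀ s, s < i → digit s x = 0) → x < 1 / 2 ^ i := by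
  intro i
  induction i with
  | zero => simpa using h1
  | succ i ih =>
    intro h
    have hxi : x < 1 / 2 ^ i := ih fun s hs => h s (Nat.lt_succ_of_lt hs)
    have hdi : digit i x = 0 := h i (Nat.lt_succ_self i)
    have hub : x * 2 ^ (i + 1) < 2 := by
      have h2 : (0:ℝ) < 2 ^ i := by positivity
      calc x * 2 ^ (i + 1) < (1 / 2 ^ i) * 2 ^ (i + 1) := by
            apply mul_lt_mul_of_pos_right hxi; positivity
        _ = 2 := by field_simp; ring
    have hlb : (0:ℝ) ≤ x * 2 ^ (i + 1) := by positivity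
    have hfl0 : (0:ℤ) ≤ ⌊x * 2 ^ (i + 1)⌋ := Int.floor_nonneg.mpr hlb
    have hfl2 : ⌊x * 2 ^ (i + 1)⌋ < 2 := Int.floor_lt.mpr (by exact_mod_cast hub)
    have hd : (digit i x : ℤ) = ⌊x * 2 ^ (i + 1)⌋ % 2 := digit_floor_pos h0
    have : ⌊x * 2 ^ (i + 1)⌋ = 0 := by omega
    have hx1 : x * 2 ^ (i + 1) < 1 := by
      have := Int.floor_lt.mp (by omega : ⌊x * 2 ^ (i + 1)⌋ < (1:ℤ))
      simpa using this
    rw [lt_div_iff₀ (by positivity)]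
    linarith [hx1]

lemma exists_digit_one {x : ℝ} {i : ℕ} (h1 : 1 / 2 ^ i ≤ x) (h2 : x < 1) :
    ∃ s, s < i ∧ digit s x = 1 := by
  by_contra hc
  push_neg at hc
  have h0 : (0:ℝ) ≤ x := le_trans (by positivity) h1
  have : x < 1 / 2 ^ i := lt_of_digits_eq_zero h0 h2 i fun s hs => by
    rcases digit_eq_or s x with h | h
    · exact h
    · exact absurd h (hc s hs)
  exact absurd h1 (not_le.mpr this)

lemma digit_eq_zero_of_small {t : ℝ} {N s : ℕ} (h0 : 0 ≤ t) (h : t < 1 / 2 ^ N)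
    (hs : s < N) : digit s t = 0 := by
  have hub : t * 2 ^ (s + 1) < 1 := by
    have hpow : (2:ℝ) ^ (s + 1) ≤ 2 ^ N := by
      apply pow_le_pow_right₀ (by norm_num) hs
    calc t * 2 ^ (s + 1) < (1 / 2 ^ N) * 2 ^ (s + 1) := by
          apply mul_lt_mul_of_pos_right h; positivity
      _ ≤ (1 / 2 ^ N) * 2 ^ N := by
          apply mul_le_mul_of_nonneg_left hpow; positivity
      _ = 1 := by field_simp
  have : ⌊t * 2 ^ (s + 1)⌋ = 0 := by
    rw [Int.floor_eq_zero_iff]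
    constructor
    · positivity
    · exact hub
  simp [Walsh.digit, this]

lemma abs_digit_sub_le (k : ℕ) (x t : ℝ) : |(digit k x : ℝ) - (digit k t : ℝ)| ≤ 1 := by
  have h1 := digit_le_one k x
  have h2 := digit_le_one k t
  rw [abs_sub_le_iff]
  constructor <;> [skip; skip] <;>
    (push_cast; have : ((digit k x : ℝ)) ≤ 1 := by exact_mod_cast h1
     have : ((digit k t : ℝ)) ≤ 1 := by exact_mod_cast h2
     have : (0:ℝ) ≤ digit k x := Nat.cast_nonneg _
     have : (0:ℝ) ≤ digit k t := Nat.cast_nonneg _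
     linarith [(by exact_mod_cast h1 : ((digit k x : ℝ)) ≤ 1),
       (by exact_mod_cast h2 : ((digit k t : ℝ)) ≤ 1),
       (Nat.cast_nonneg (digit k x) : (0:ℝ) ≤ _),
       (Nat.cast_nonneg (digit k t) : (0:ℝ) ≤ _)])

def dterm (x t : ℝ) (k : ℕ) : ℝ := |(digit k x : ℝ) - (digit k t : ℝ)| * (2 : ℝ)⁻¹ ^ (k + 1)

lemma dterm_nonneg (x t : ℝ) (k : ℕ) : 0 ≤ dterm x t k := by
  unfold dterm; positivity

lemma dterm_le (x t : ℝ) (k : ℕ) : dterm x t k ≤ (2 : ℝ)⁻¹ ^ (k + 1) := by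
  unfold dterm
  calc |(digit k x : ℝ) - (digit k t : ℝ)| * (2 : ℝ)⁻¹ ^ (k + 1)
      ≤ 1 * (2 : ℝ)⁻¹ ^ (k + 1) := by
        apply mul_le_mul_of_nonneg_right (abs_digit_sub_le k x t); positivity
    _ = (2 : ℝ)⁻¹ ^ (k + 1) := one_mul _

lemma summable_half_pow : Summable (fun k : ℕ => (2 : ℝ)⁻¹ ^ (k + 1)) := by
  have h : Summable (fun k : ℕ => (2 : ℝ)⁻¹ ^ k) :=
    summable_geometric_of_lt_one (by norm_num) (by norm_num)
  simpa [pow_succ, mul_comm] using h.mul_left (2:ℝ)⁻¹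

lemma tsum_half_pow : ∑' k : ℕ, (2 : ℝ)⁻¹ ^ (k + 1) = 1 := by
  have h : ∑' k : ℕ, (2 : ℝ)⁻¹ ^ k = 2 := by
    rw [tsum_geometric_of_lt_one (by norm_num) (by norm_num)]; norm_num
  calc ∑' k : ℕ, (2 : ℝ)⁻¹ ^ (k + 1) = ∑' k : ℕ, (2:ℝ)⁻¹ * (2 : ℝ)⁻¹ ^ k := by
        congr 1; funext k; rw [pow_succ]; ring
    _ = (2:ℝ)⁻¹ * ∑' k : ℕ, (2 : ℝ)⁻¹ ^ k := tsum_mul_left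
    _ = 1 := by rw [h]; norm_num

lemma summable_dterm (x t : ℝ) : Summable (dterm x t) :=
  Summable.of_nonneg_of_le (dterm_nonneg x t) (dterm_le x t) summable_half_pow

lemma dadd_eq_tsum (x t : ℝ) : dadd x t = ∑' k, dterm x t k := rfl

lemma dadd_nonneg (x t : ℝ) : 0 ≤ dadd x t :=
  tsum_nonneg (dterm_nonneg x t)

lemma dadd_le_one (x t : ℝ) : dadd x t ≤ 1 := by
  rw [dadd_eq_tsum, ← tsum_half_pow]
  exact Summable.tsum_le_tsum (dterm_le x t) (summable_dterm x t) summable_half_pow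

lemma le_dadd (x t : ℝ) (s : ℕ) : dterm x t s ≤ dadd x t :=
  Summable.le_tsum (summable_dterm x t) s fun k _ => dterm_nonneg x t k

lemma dadd_lt_one {x t : ℝ} {k0 : ℕ} (h : digit k0 x = digit k0 t) : dadd x t < 1 := by
  have hterm : dterm x t k0 = 0 := by simp [dterm, h]
  have hsum : ∑' k, dterm x t k ≤ ∑' k : ℕ, (if k = k0 then 0 else (2 : ℝ)⁻¹ ^ (k + 1)) := by
    apply Summable.tsum_le_tsum _ (summable_dterm x t)
    · apply Summable.of_nonneg_of_le _ _ summable_half_pow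
      · intro k; split <;> positivity
      · intro k; split <;> [positivity; exact le_rfl]
    · intro k
      by_cases hk : k = k0
      · subst hk; simp [hterm]
      · simpa [hk] using dterm_le x t k
  have hgeo := Summable.tsum_eq_add_tsum_ite summable_half_pow k0
  rw [tsum_half_pow] at hgeo
  have hpos : (0:ℝ) < (2 : ℝ)⁻¹ ^ (k0 + 1) := by positivity
  rw [dadd_eq_tsum]
  calc ∑' k, dterm x t k ≤ ∑' k : ℕ, (if k = k0 then 0 else (2 : ℝ)⁻¹ ^ (k + 1)) := hsum
    _ = 1 - (2 : ℝ)⁻¹ ^ (k0 + 1) := by linarith [hgeo]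
    _ < 1 := by linarith

lemma floor_rec {k : ℕ} {t : ℝ} (h0 : 0 ≤ t) :
    ⌊t * 2 ^ (k + 1)⌋ = 2 * ⌊t * 2 ^ k⌋ + digit k t := by
  set a := ⌊t * 2 ^ k⌋ with ha
  have ha0 : 0 ≤ a := Int.floor_nonneg.mpr (by positivity)
  have h1 : (a : ℝ) ≤ t * 2 ^ k := Int.floor_le _
  have h2 : t * 2 ^ k < a + 1 := Int.lt_floor_add_one _
  have hx : t * 2 ^ (k + 1) = (t * 2 ^ k) * 2 := by ring
  set b := ⌊t * 2 ^ (k + 1)⌋ with hb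
  have hb1 : (2 * a : ℤ) ≤ b := by
    rw [hb]
    apply Int.le_floor.mpr
    push_cast
    rw [hx]; linarith
  have hb2 : b < 2 * a + 2 := by
    rw [hb]
    apply Int.floor_lt.mpr
    push_cast
    rw [hx]; linarith
  have hd : (digit k t : ℤ) = b % 2 := by rw [hb]; exact digit_floor_pos h0
  omega

lemma eq_of_digits_eq {t t' : ℝ} (h0 : 0 ≤ t) (h1 : t < 1) (h0' : 0 ≤ t') (h1' : t' < 1)
    (h : ∀ k, digit k t = digit k t') : t = t' := by
  have key : ∀ m : ℕ, ⌊t * 2 ^ m⌋ = ⌊t' * 2 ^ m⌋ := by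
    intro m
    induction m with
    | zero =>
      simp only [pow_zero, mul_one]
      rw [Int.floor_eq_zero_iff.mpr ⟨h0, h1⟩, Int.floor_eq_zero_iff.mpr ⟨h0', h1'⟩]
    | succ m ih => rw [floor_rec h0, floor_rec h0', ih, h m]
  by_contra hne
  have hpos : 0 < |t - t'| := abs_pos.mpr (sub_ne_zero.mpr hne)
  obtain ⟨m, hm⟩ := exists_pow_lt_of_lt_one hpos (by norm_num : (1/2 : ℝ) < 1)
  have hv := key m
  have hA : (⌊t * 2 ^ m⌋ : ℝ) ≤ t * 2 ^ m := Int.floor_le _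
  have hB : t * 2 ^ m < ⌊t * 2 ^ m⌋ + 1 := Int.lt_floor_add_one _
  have hA' : (⌊t' * 2 ^ m⌋ : ℝ) ≤ t' * 2 ^ m := Int.floor_le _
  have hB' : t' * 2 ^ m < ⌊t' * 2 ^ m⌋ + 1 := Int.lt_floor_add_one _
  rw [hv] at hA hB
  have h2m : (0:ℝ) < 2 ^ m := by positivity
  have hd1 : (t - t') * 2 ^ m < 1 := by nlinarith
  have hd2 : (t' - t) * 2 ^ m < 1 := by nlinarith
  have habs : |t - t'| * 2 ^ m < 1 := by
    rcases abs_cases (t - t') with ⟨he, _⟩ | ⟨he, _⟩ <;> rw [he]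
    · exact hd1
    · simpa [neg_sub] using hd2
  have hhalf : (1/2:ℝ) ^ m * 2 ^ m = 1 := by
    rw [div_pow, one_pow, div_mul_cancel₀]
    positivity
  nlinarith [hm, habs, h2m, mul_pos hpos h2m]

lemma Q_nonneg {q : ℕ → ℝ} (hq : ∀ k, 0 < q k) (n : ℕ) : 0 ≤ Q q n :=
  Finset.sum_nonneg fun k _ => (hq k).le

lemma Q_pos {q : ℕ → ℝ} (hq : ∀ k, 0 < q k) {n : ℕ} (hn : 1 ≤ n) : 0 < Q q n :=
  Finset.sum_pos (fun k _ => hq k) (Finset.nonempty_range_iff.mpr (by omega))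

lemma Q_mono {q : ℕ → ℝ} (hq : ∀ k, 0 < q k) : Monotone (Q q) := fun m n h =>
  Finset.sum_le_sum_of_subset_of_nonneg (Finset.range_subset_range.2 h) fun k _ _ => (hq k).le

lemma F1_abs_le {q : ℕ → ℝ} (hq : ∀ k, 0 < q k) {N n j : ℕ}
    (hj1 : 1 ≤ j) (hjN : j ≤ N) (hn : 2 ^ N < n) {y : ℝ}
    (hy1 : 1 / 2 ^ j ≤ y) (hy2 : y < 1) :
    |F1 q n y| ≤ Q q (2 ^ j) * 2 ^ j / Q q (2 ^ N) := by
  obtain ⟨s, hs, hds⟩ := exists_digit_one hy1 hy2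
  have hN1 : 1 ≤ 2 ^ N := Nat.one_le_two_pow
  have hn1 : 1 ≤ n := le_trans hN1 hn.le
  have hQn : 0 < Q q n := Q_pos hq hn1
  have hQN : 0 < Q q (2 ^ N) := Q_pos hq hN1
  have hQj : 0 < Q q (2 ^ j) := Q_pos hq Nat.one_le_two_pow
  have hQNn : Q q (2 ^ N) ≤ Q q n := Q_mono hq hn.le
  have hjn : j ≤ n + 1 := by
    have h2 : N < 2 ^ N := Nat.lt_two_pow_self (n := N)
    omega
  rw [Walsh.F1, abs_mul, abs_div, abs_walsh]
  have habs : |Q q n| = Q q n := abs_of_pos hQn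
  rw [habs]
  have hsum : |∑ i ∈ Finset.range (n + 1),
      if n.testBit i then Q q (n % 2 ^ (i + 1)) * walsh (2 ^ i) y * D (2 ^ i) y else 0|
      ≤ Q q (2 ^ j) * (2 ^ j - 1) := by
    calc |∑ i ∈ Finset.range (n + 1),
        if n.testBit i then Q q (n % 2 ^ (i + 1)) * walsh (2 ^ i) y * D (2 ^ i) y else 0|
        ≤ ∑ i ∈ Finset.range (n + 1),
          |if n.testBit i then Q q (n % 2 ^ (i + 1)) * walsh (2 ^ i) y * D (2 ^ i) y else 0| :=
          Finset.abs_sum_le_sum_abs _ _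
      _ ≤ ∑ i ∈ Finset.range (n + 1), (if i < j then Q q (2 ^ j) * 2 ^ i else 0) := by
          apply Finset.sum_le_sum
          intro i _
          by_cases hbit : n.testBit i
          · rw [if_pos hbit]
            by_cases hij : i < j
            · rw [if_pos hij]
              rw [abs_mul, abs_mul, abs_walsh, mul_one]
              have h1 : |Q q (n % 2 ^ (i + 1))| ≤ Q q (2 ^ j) := by
                rw [abs_of_nonneg (Q_nonneg hq _)]
                apply le_trans (Q_mono hq (Nat.mod_lt _ (by positivity)).le)
                exact Q_mono hq (Nat.pow_le_pow_right (by norm_num) hij)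
              have h2 : |D (2 ^ i) y| ≤ (2:ℝ) ^ i := by
                simpa using abs_D_le (2 ^ i) y
              exact mul_le_mul h1 h2 (abs_nonneg _) hQj.le
            · rw [if_neg hij]
              push_neg at hij
              have hD : D (2 ^ i) y = 0 :=
                D_two_pow_eq_zero ⟨s, lt_of_lt_of_le hs hij, hds⟩
              simp [hD]
          · rw [if_neg hbit, abs_zero]
            split <;> [positivity; exact le_rfl]
      _ = ∑ i ∈ Finset.range j, Q q (2 ^ j) * 2 ^ i := by
          rw [← Finset.sum_subset (Finset.range_subset_range.2 hjn)
            (fun i _ hi => if_neg (by simpa using hi))]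
          exact Finset.sum_congr rfl fun i hi => if_pos (Finset.mem_range.mp hi)
      _ = Q q (2 ^ j) * (2 ^ j - 1) := by
          rw [← Finset.mul_sum, geom_sum_eq (by norm_num : (2:ℝ) ≠ 1)]
          norm_num
  have h2j : (1:ℝ) ≤ 2 ^ j := one_le_pow₀ (by norm_num)
  calc 1 / Q q n * |∑ i ∈ Finset.range (n + 1),
      if n.testBit i then Q q (n % 2 ^ (i + 1)) * walsh (2 ^ i) y * D (2 ^ i) y else 0|
      ≤ 1 / Q q n * (Q q (2 ^ j) * (2 ^ j - 1)) := by
        apply mul_le_mul_of_nonneg_left hsum; positivity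
    _ ≤ 1 / Q q (2 ^ N) * (Q q (2 ^ j) * 2 ^ j) := by
        apply mul_le_mul
        · apply one_div_le_one_div_of_le hQN hQNn
        · nlinarith [hQj, h2j]
        · nlinarith [hQj, h2j]
        · positivity
    _ = Q q (2 ^ j) * 2 ^ j / Q q (2 ^ N) := by ring

lemma dadd_subsingleton (x : ℝ) {N : ℕ} :
    {t : ℝ | t ∈ IN N ∧ dadd x t = 1}.Subsingleton := by
  intro t ht t' ht'
  have hdig : ∀ (u : ℝ), dadd x u = 1 → ∀ k, digit k u ≠ digit k x := by
    intro u hu k hk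
    exact absurd hu (ne_of_lt (dadd_lt_one hk.symm))
  have h1 : ∀ k, digit k t = digit k t' := by
    intro k
    have e1 := hdig t ht.2 k
    have e2 := hdig t' ht'.2 k
    rcases digit_eq_or k x with h | h <;> rcases digit_eq_or k t with h' | h' <;>
      rcases digit_eq_or k t' with h'' | h'' <;> omega
  have hIN : ∀ u : ℝ, u ∈ IN N → 0 ≤ u ∧ u < 1 := by
    intro u hu
    obtain ⟨hu0, hu1⟩ := hu
    refine ⟨hu0, lt_of_lt_of_le hu1 ?_⟩
    rw [div_le_one (by positivity)]
    exact one_le_pow₀ (by norm_num)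
  obtain ⟨ht0, ht1⟩ := hIN t ht.1
  obtain ⟨ht0', ht1'⟩ := hIN t' ht'.1
  exact eq_of_digits_eq ht0 ht1 ht0' ht1' h1

lemma integral_F1_le {q : ℕ → ℝ} (hq : ∀ k, 0 < q k) {N n j : ℕ}
    (hj1 : 1 ≤ j) (hjN : j ≤ N) (hn : 2 ^ N < n) {x : ℝ}
    (hx1 : 1 / 2 ^ j ≤ x) (hx2 : x < 1) :
    (∫ t in IN N, |F1 q n (dadd x t)|)
      ≤ (Q q (2 ^ j) * 2 ^ j / Q q (2 ^ N)) * (1 / 2 ^ N) := by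
  set M : ℝ := Q q (2 ^ j) * 2 ^ j / Q q (2 ^ N) with hM
  have hvol : volume (IN N) = ENNReal.ofReal (1 / 2 ^ N) := by
    rw [IN, Real.volume_Ico, sub_zero]
  obtain ⟨s, hs, hds⟩ := exists_digit_one hx1 hx2
  have hPgood : ∀ t : ℝ, t ∈ IN N → dadd x t ≠ 1 → ‖|F1 q n (dadd x t)|‖ ≤ M := by
    intro t ht hne
    obtain ⟨ht0, ht1⟩ := ht
    have hdt : digit s t = 0 := digit_eq_zero_of_small ht0 ht1 (lt_of_lt_of_le hs hjN)
    have hy1 : 1 / 2 ^ j ≤ dadd x t := by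
      have hterm : dterm x t s = (2 : ℝ)⁻¹ ^ (s + 1) := by
        simp [dterm, hdt, hds]
      have h2 : (1 : ℝ) / 2 ^ j ≤ (2 : ℝ)⁻¹ ^ (s + 1) := by
        rw [inv_pow, ← one_div]
        apply one_div_le_one_div_of_le (by positivity)
        exact pow_le_pow_right₀ (by norm_num) hs
      exact le_trans h2 (hterm ▸ le_dadd x t s)
    have hy2 : dadd x t < 1 := lt_of_le_of_ne (dadd_le_one x t) hne
    rw [Real.norm_eq_abs, abs_abs]
    exact F1_abs_le hq hj1 hjN hn hy1 hy2
  have hb : ∀ᵐ t ∂(volume.restrict (IN N)), ‖|F1 q n (dadd x t)|‖ ≤ M := by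
    rw [ae_iff]
    have hsub : {t : ℝ | ¬ ‖|F1 q n (dadd x t)|‖ ≤ M}
        ⊆ {t : ℝ | t ∈ IN N ∧ dadd x t = 1} ∪ (IN N)ᶜ := by
      intro t ht
      by_cases htIN : t ∈ IN N
      · by_cases hne : dadd x t = 1
        · exact Or.inl ⟨htIN, hne⟩
        · exact absurd (hPgood t htIN hne) ht
      · exact Or.inr htIN
    refine le_antisymm ?_ (by simp)
    calc volume.restrict (IN N) {t : ℝ | ¬ ‖|F1 q n (dadd x t)|‖ ≤ M}
        ≤ volume.restrict (IN N) ({t : ℝ | t ∈ IN N ∧ dadd x t = 1} ∪ (IN N)ᶜ) :=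
          measure_mono hsub
      _ ≤ volume.restrict (IN N) {t : ℝ | t ∈ IN N ∧ dadd x t = 1}
          + volume.restrict (IN N) (IN N)ᶜ := measure_union_le _ _
      _ = 0 := by
          have h1 : volume.restrict (IN N) {t : ℝ | t ∈ IN N ∧ dadd x t = 1} = 0 := by
            apply le_antisymm _ (by simp)
            calc volume.restrict (IN N) {t : ℝ | t ∈ IN N ∧ dadd x t = 1}
                ≤ volume {t : ℝ | t ∈ IN N ∧ dadd x t = 1} :=
                  Measure.restrict_le_self _
              _ = 0 := ((dadd_subsingleton x).countable).measure_zero _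
          have h2 : volume.restrict (IN N) (IN N)ᶜ = 0 := by
            have hmeas : MeasurableSet (IN N) := measurableSet_Ico
            rw [Measure.restrict_apply hmeas.compl]
            simp
          rw [h1, h2, add_zero]
  have hlt : volume (IN N) < ⊤ := by rw [hvol]; exact ENNReal.ofReal_lt_top
  have hnorm := MeasureTheory.norm_setIntegral_le_of_norm_le_const_ae hlt hb
  have htoReal : volume.real (IN N) = 1 / 2 ^ N := by
    rw [measureReal_def, hvol, ENNReal.toReal_ofReal (by positivity)]
  rw [htoReal] at hnorm
  calc (∫ t in IN N, |F1 q n (dadd x t)|)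
      ≤ ‖∫ t in IN N, |F1 q n (dadd x t)|‖ := le_abs_self _
    _ ≤ M * (1 / 2 ^ N) := hnorm

lemma shell_exists : ∀ (N : ℕ) (x : ℝ), 1 / 2 ^ N ≤ x → x < 1 →
    ∃ j, 1 ≤ j ∧ j ≤ N ∧ 1 / 2 ^ j ≤ x ∧ x < 1 / 2 ^ (j - 1) := by
  intro N
  induction N with
  | zero => intro x h1 h2; norm_num at h1; linarith
  | succ N ih =>
    intro x h1 h2
    by_cases h : 1 / 2 ^ N ≤ x
    · obtain ⟨j, hj1, hj2, hj3, hj4⟩ := ih x h h2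
      exact ⟨j, hj1, le_trans hj2 (Nat.le_succ N), hj3, hj4⟩
    · push_neg at h
      refine ⟨N + 1, by omega, le_refl _, h1, ?_⟩
      simpa using h

lemma pow2_calc {p : ℝ} (hp1 : 0 < p) {A B : ℝ} (hA : 0 < A) (hB : 0 < B) (N j : ℕ) :
    ((2:ℝ) ^ ((N:ℝ) / p) * (A * 2 ^ j / B * (1 / 2 ^ N))) ^ p * (1 / 2 ^ j)
      = (2:ℝ) ^ ((N:ℝ) * (1 - p)) * B ^ (-p) * (A ^ p * (2:ℝ) ^ ((j:ℝ) * (p - 1))) := by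
  have h2j : (0:ℝ) < 2 ^ j := by positivity
  have h2N : (0:ℝ) < 2 ^ N := by positivity
  have hbpos : (0:ℝ) < (2:ℝ) ^ ((N:ℝ)/p) := Real.rpow_pos_of_pos two_pos _
  have hu : (0:ℝ) < A * 2 ^ j / B * (1 / 2 ^ N) := by positivity
  have hbu : (0:ℝ) < (2:ℝ) ^ ((N:ℝ)/p) * (A * 2 ^ j / B * (1 / 2 ^ N)) := mul_pos hbpos hu
  have hL : (0:ℝ) < ((2:ℝ) ^ ((N:ℝ) / p) * (A * 2 ^ j / B * (1 / 2 ^ N))) ^ p * (1 / 2 ^ j) :=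
    mul_pos (Real.rpow_pos_of_pos hbu p) (by positivity)
  have hR : (0:ℝ) < (2:ℝ) ^ ((N:ℝ) * (1 - p)) * B ^ (-p) * (A ^ p * (2:ℝ) ^ ((j:ℝ) * (p - 1))) :=
    mul_pos (mul_pos (Real.rpow_pos_of_pos two_pos _) (Real.rpow_pos_of_pos hB _))
      (mul_pos (Real.rpow_pos_of_pos hA _) (Real.rpow_pos_of_pos two_pos _))
  refine Real.log_injOn_pos (Set.mem_Ioi.mpr hL) (Set.mem_Ioi.mpr hR) ?_
  have hAj : (0:ℝ) < A * 2 ^ j := mul_pos hA h2j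
  have hAjB : (0:ℝ) < A * 2 ^ j / B := div_pos hAj hB
  rw [Real.log_mul (Real.rpow_pos_of_pos hbu p).ne' (by positivity : (1:ℝ)/2^j ≠ 0),
    Real.log_rpow hbu,
    Real.log_mul hbpos.ne' hu.ne',
    Real.log_rpow two_pos,
    Real.log_mul hAjB.ne' (by positivity : (1:ℝ)/2^N ≠ 0),
    Real.log_div hAj.ne' hB.ne',
    Real.log_mul hA.ne' h2j.ne',
    Real.log_pow,
    one_div, one_div, Real.log_inv, Real.log_inv,
    Real.log_pow, Real.log_pow,
    Real.log_mul (mul_pos (Real.rpow_pos_of_pos two_pos _) (Real.rpow_pos_of_pos hB _)).ne'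
      (mul_pos (Real.rpow_pos_of_pos hA _) (Real.rpow_pos_of_pos two_pos _)).ne',
    Real.log_mul (Real.rpow_pos_of_pos two_pos _).ne' (Real.rpow_pos_of_pos hB _).ne',
    Real.log_mul (Real.rpow_pos_of_pos hA _).ne' (Real.rpow_pos_of_pos two_pos _).ne',
    Real.log_rpow two_pos, Real.log_rpow hB, Real.log_rpow hA, Real.log_rpow two_pos]
  field_simp
  ring


end Aux

/-- quasi-locality estimate for the first part `F_{n,1}` of the
Nörlund kernel decomposition. -/
theorem F1_quasi_locality
    (q : ℕ → ℝ) (hq_anti : Antitone q) (hq_pos : ∀ k, 0 < q k)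
    (p : ℝ) (hp1 : 0 < p) (hp2 : p ≤ 1) :
    ∃ c : ℝ, ∀ N : ℕ,
      (∫⁻ x in Set.Ico (0:ℝ) 1 \ Walsh.IN N,
          (⨆ n : ℕ, ⨆ _ : 2 ^ N < n,
            ENNReal.ofReal ((2:ℝ) ^ ((N:ℝ) / p) *
              ∫ t in Walsh.IN N, |Walsh.F1 q n (Walsh.dadd x t)|)) ^ p)
        ≤ ENNReal.ofReal (c * (2:ℝ) ^ ((N:ℝ) * (1 - p)) * (Walsh.Q q (2 ^ N)) ^ (-p) *
            ∑ j ∈ Finset.Icc 1 N, (Walsh.Q q (2 ^ j)) ^ p * (2:ℝ) ^ ((j:ℝ) * (p - 1))) := by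
  classical
  refine ⟨1, fun N => ?_⟩
  have hBpos : 0 < Walsh.Q q (2 ^ N) := Q_pos hq_pos Nat.one_le_two_pow
  set a : ℕ → ℝ := fun j => (2:ℝ) ^ ((N:ℝ) / p) *
    (Walsh.Q q (2 ^ j) * 2 ^ j / Walsh.Q q (2 ^ N) * (1 / 2 ^ N)) with ha
  have haj : ∀ j : ℕ, 0 ≤ a j := by
    intro j
    rw [ha]
    apply mul_nonneg (Real.rpow_nonneg (by norm_num) _)
    apply mul_nonneg
    · exact div_nonneg (mul_nonneg (Q_nonneg hq_pos _) (by positivity)) hBpos.le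
    · positivity
  set Sh : ℕ → Set ℝ := fun j =>
    if 1 ≤ j ∧ j ≤ N then Set.Ico (1 / 2 ^ j : ℝ) (1 / 2 ^ (j - 1)) else ∅ with hSh
  have hsub : Set.Ico (0:ℝ) 1 \ Walsh.IN N ⊆ ⋃ j, Sh j := by
    rintro x ⟨⟨hx0, hx1⟩, hxI⟩
    have hxge : 1 / 2 ^ N ≤ x := by
      by_contra hc; push_neg at hc; exact hxI ⟨hx0, hc⟩
    obtain ⟨j, hj1, hj2, hj3, hj4⟩ := shell_exists N x hxge hx1
    refine Set.mem_iUnion.mpr ⟨j, ?_⟩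
    simp only [hSh, if_pos (⟨hj1, hj2⟩ : 1 ≤ j ∧ j ≤ N)]
    exact ⟨hj3, hj4⟩
  have hshell : ∀ j, 1 ≤ j → j ≤ N →
      (∫⁻ x in Set.Ico (1/2^j : ℝ) (1/2^(j-1)),
        (⨆ n : ℕ, ⨆ _ : 2 ^ N < n,
            ENNReal.ofReal ((2:ℝ) ^ ((N:ℝ) / p) *
              ∫ t in Walsh.IN N, |Walsh.F1 q n (Walsh.dadd x t)|)) ^ p)
        ≤ ENNReal.ofReal (a j ^ p * (1 / 2 ^ j)) := by
    intro j hj1 hj2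
    have hbound : ∀ x ∈ Set.Ico (1/2^j : ℝ) (1/2^(j-1)),
        (⨆ n : ℕ, ⨆ _ : 2 ^ N < n,
            ENNReal.ofReal ((2:ℝ) ^ ((N:ℝ) / p) *
              ∫ t in Walsh.IN N, |Walsh.F1 q n (Walsh.dadd x t)|)) ^ p
          ≤ ENNReal.ofReal (a j) ^ p := by
      intro x hx
      obtain ⟨hxl, hxr⟩ := hx
      have hx2 : x < 1 := lt_of_lt_of_le hxr (by
        rw [div_le_one (by positivity)]
        exact one_le_pow₀ (by norm_num))
      apply ENNReal.rpow_le_rpow _ hp1.le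
      apply iSup_le; intro n; apply iSup_le; intro hn
      apply ENNReal.ofReal_le_ofReal
      rw [ha]
      exact mul_le_mul_of_nonneg_left (integral_F1_le hq_pos hj1 hj2 hn hxl hx2)
        (by positivity)
    calc (∫⁻ x in Set.Ico (1/2^j : ℝ) (1/2^(j-1)),
        (⨆ n : ℕ, ⨆ _ : 2 ^ N < n,
            ENNReal.ofReal ((2:ℝ) ^ ((N:ℝ) / p) *
              ∫ t in Walsh.IN N, |Walsh.F1 q n (Walsh.dadd x t)|)) ^ p)
        ≤ ∫⁻ _x in Set.Ico (1/2^j : ℝ) (1/2^(j-1)), ENNReal.ofReal (a j) ^ p :=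
          MeasureTheory.setLIntegral_mono measurable_const hbound
      _ = ENNReal.ofReal (a j) ^ p * volume (Set.Ico (1/2^j : ℝ) (1/2^(j-1))) :=
          MeasureTheory.setLIntegral_const _ _
      _ = ENNReal.ofReal (a j ^ p * (1 / 2 ^ j)) := by
          have hvol : volume (Set.Ico (1/2^j : ℝ) (1/2^(j-1)))
              = ENNReal.ofReal (1/2^j) := by
            rw [Real.volume_Ico]
            congr 1
            have h2 : (2:ℝ)^j = 2 * 2^(j-1) := by
              rw [← pow_succ']
              congr 1
              omega
            rw [h2]
            have h3 : (0:ℝ) < 2^(j-1) := by positivity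
            field_simp
            ring
          rw [hvol, ENNReal.ofReal_rpow_of_nonneg (haj j) hp1.le,
            ← ENNReal.ofReal_mul (Real.rpow_nonneg (haj j) p)]
  have hzero : ∀ j, j ∉ Finset.Icc 1 N →
      (∫⁻ x in Sh j,
        (⨆ n : ℕ, ⨆ _ : 2 ^ N < n,
            ENNReal.ofReal ((2:ℝ) ^ ((N:ℝ) / p) *
              ∫ t in Walsh.IN N, |Walsh.F1 q n (Walsh.dadd x t)|)) ^ p) = 0 := by
    intro j hj
    simp only [Finset.mem_Icc] at hj
    have hempty : Sh j = ∅ := by simp only [hSh]; rw [if_neg (by omega)]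
    rw [hempty]
    simp
  calc (∫⁻ x in Set.Ico (0:ℝ) 1 \ Walsh.IN N,
        (⨆ n : ℕ, ⨆ _ : 2 ^ N < n,
            ENNReal.ofReal ((2:ℝ) ^ ((N:ℝ) / p) *
              ∫ t in Walsh.IN N, |Walsh.F1 q n (Walsh.dadd x t)|)) ^ p)
      ≤ ∫⁻ x in ⋃ j, Sh j,
        (⨆ n : ℕ, ⨆ _ : 2 ^ N < n,
            ENNReal.ofReal ((2:ℝ) ^ ((N:ℝ) / p) *
              ∫ t in Walsh.IN N, |Walsh.F1 q n (Walsh.dadd x t)|)) ^ p :=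
        MeasureTheory.lintegral_mono_set hsub
    _ ≤ ∑' j, ∫⁻ x in Sh j,
        (⨆ n : ℕ, ⨆ _ : 2 ^ N < n,
            ENNReal.ofReal ((2:ℝ) ^ ((N:ℝ) / p) *
              ∫ t in Walsh.IN N, |Walsh.F1 q n (Walsh.dadd x t)|)) ^ p :=
        MeasureTheory.lintegral_iUnion_le _ _
    _ = ∑ j ∈ Finset.Icc 1 N, ∫⁻ x in Sh j,
        (⨆ n : ℕ, ⨆ _ : 2 ^ N < n,
            ENNReal.ofReal ((2:ℝ) ^ ((N:ℝ) / p) *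
              ∫ t in Walsh.IN N, |Walsh.F1 q n (Walsh.dadd x t)|)) ^ p :=
        tsum_eq_sum hzero
    _ ≤ ∑ j ∈ Finset.Icc 1 N, ENNReal.ofReal (a j ^ p * (1 / 2 ^ j)) := by
        apply Finset.sum_le_sum
        intro j hj
        simp only [Finset.mem_Icc] at hj
        have hSj : Sh j = Set.Ico (1/2^j:ℝ) (1/2^(j-1)) := by
          simp only [hSh]; rw [if_pos ⟨hj.1, hj.2⟩]
        rw [hSj]
        exact hshell j hj.1 hj.2
    _ = ENNReal.ofReal (∑ j ∈ Finset.Icc 1 N, a j ^ p * (1 / 2 ^ j)) :=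
        (ENNReal.ofReal_sum_of_nonneg
          (fun j _ => mul_nonneg (Real.rpow_nonneg (haj j) p) (by positivity))).symm
    _ ≤ ENNReal.ofReal (1 * (2:ℝ) ^ ((N:ℝ) * (1 - p)) * (Walsh.Q q (2 ^ N)) ^ (-p) *
          ∑ j ∈ Finset.Icc 1 N, (Walsh.Q q (2 ^ j)) ^ p * (2:ℝ) ^ ((j:ℝ) * (p - 1))) := by
        apply ENNReal.ofReal_le_ofReal
        rw [one_mul, Finset.mul_sum]
        apply le_of_eq
        apply Finset.sum_congr rfl
        intro j hj
        simp only [ha]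
        rw [pow2_calc hp1 (Q_pos hq_pos Nat.one_le_two_pow) hBpos N j]
end
end

section
/- For n ∈ ℕ let f_n := D_{2^{n+1}} − D_{2^n}. Then sup_{m∈ℕ} |S_{2^m}(f_n)(x)| = D_{2^n}(x) for every x ∈ [0,1), and consequently for every p ∈ (0, 1]: ‖f_n‖_{H_p} = 2^{n(1−1/p)}. -/
open MeasureTheory Filter
open scoped ENNReal NNReal

noncomputable section

namespace Walsh



lemma lt_two_pow_of_le {a N : ℕ} (h : a ≤ N) : a < 2 ^ N :=
  lt_of_lt_of_le a.lt_two_pow_self (Nat.pow_le_pow_right (by norm_num) h)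

lemma measurable_digit (k : ℕ) : Measurable (digit k) := by
  have h1 : Measurable fun x : ℝ => ⌊x * 2 ^ (k+1)⌋ :=
    Int.measurable_floor.comp (measurable_id.mul_const _)
  have h2 : Measurable fun z : ℤ => z.toNat % 2 := measurable_from_top
  exact h2.comp h1

lemma measurable_walsh (m : ℕ) : Measurable (walsh m) := by
  have h1 : Measurable fun x : ℝ => ∑ k ∈ Finset.range (m + 1), eps k m * digit k x :=
    Finset.measurable_sum _ fun k _ => (measurable_digit k).const_mul _
  have h2 : Measurable fun s : ℕ => (-1 : ℝ) ^ s := measurable_from_top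
  exact h2.comp h1

lemma abs_walsh (m : ℕ) (x : ℝ) : |walsh m x| = 1 := by
  unfold walsh; rw [abs_pow, abs_neg, abs_one, one_pow]

lemma eps_eq_zero {k m : ℕ} (h : m < 2 ^ k) : eps k m = 0 := by
  simp [eps, Nat.testBit_lt_two_pow h]

lemma neg_one_pow_congr {a b : ℕ} (h : a % 2 = b % 2) : ((-1 : ℝ)) ^ a = (-1) ^ b := by
  conv_lhs => rw [← Nat.div_add_mod a 2]
  conv_rhs => rw [← Nat.div_add_mod b 2]
  rw [pow_add, pow_add, pow_mul, pow_mul, h, neg_one_sq, one_pow, one_pow]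

lemma sum_eps_ext {m A B : ℕ} (hA : m < 2 ^ A) (hB : m < 2 ^ B) (c : ℕ → ℕ) :
    ∑ k ∈ Finset.range A, eps k m * c k = ∑ k ∈ Finset.range B, eps k m * c k := by
  have key : ∀ X Y : ℕ, X ≤ Y → m < 2 ^ X →
      ∑ k ∈ Finset.range X, eps k m * c k = ∑ k ∈ Finset.range Y, eps k m * c k := by
    intro X Y hXY hX
    refine Finset.sum_subset (Finset.range_subset_range.2 hXY) ?_
    intro k _ hk
    have : m < 2 ^ k := lt_of_lt_of_le hX (Nat.pow_le_pow_right (by norm_num)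
      (le_of_not_gt fun h => hk (Finset.mem_range.2 h)))
    rw [eps_eq_zero this, zero_mul]
  rcases le_total A B with h | h
  · exact key A B h hA
  · exact (key B A h hB).symm

/-- the exponent sum can be taken over any range `N` with `m < 2^N`. -/
lemma walsh_eq_sum {m N : ℕ} (h : m < 2 ^ N) (x : ℝ) :
    walsh m x = (-1 : ℝ) ^ (∑ k ∈ Finset.range N, eps k m * digit k x) := by
  unfold walsh
  congr 1
  exact sum_eps_ext (lt_two_pow_of_le (Nat.le_succ m)) h _

lemma walsh_mul (a b : ℕ) (x : ℝ) : walsh a x * walsh b x = walsh (a ^^^ b) x := by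
  set N := a + b + (a ^^^ b) + 1 with hN
  have ha : a < 2 ^ N := lt_two_pow_of_le (by omega)
  have hb : b < 2 ^ N := lt_two_pow_of_le (by omega)
  have hx : a ^^^ b < 2 ^ N := lt_two_pow_of_le (by omega)
  rw [walsh_eq_sum ha x, walsh_eq_sum hb x, walsh_eq_sum hx x, ← pow_add]
  apply neg_one_pow_congr
  rw [← Finset.sum_add_distrib]
  rw [Finset.sum_nat_mod]
  conv_rhs => rw [Finset.sum_nat_mod]
  congr 1
  apply Finset.sum_congr rfl
  intro k _
  have heps : eps k (a ^^^ b) % 2 = (eps k a + eps k b) % 2 := by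
    simp only [eps, Nat.testBit_xor]
    cases h1 : a.testBit k <;> cases h2 : b.testBit k <;> simp
  rw [Nat.mul_mod, heps, ← Nat.mul_mod, add_mul]



lemma integrableOn_walsh (m : ℕ) (a b : ℝ) :
    IntegrableOn (walsh m) (Set.Ico a b) volume := by
  have hc : IntegrableOn (fun _ : ℝ => (1:ℝ)) (Set.Ico a b) volume :=
    integrableOn_const measure_Ico_lt_top.ne (by simp)
  refine Integrable.mono' hc ((measurable_walsh m).aestronglyMeasurable) ?_
  filter_upwards with x
  rw [Real.norm_eq_abs, abs_walsh]

lemma walsh_zero (x : ℝ) : walsh 0 x = 1 := by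
  simp [walsh, eps]

lemma digit_succ_half (u : ℝ) (k : ℕ) : digit (k+1) (u/2) = digit k u := by
  unfold digit
  congr 2
  ring_nf

lemma digit_zero_half {u : ℝ} (hu : 0 ≤ u) (hu1 : u < 1) : digit 0 (u/2) = 0 := by
  unfold digit
  have : u / 2 * 2 ^ (0+1) = u := by ring
  rw [this, Int.floor_eq_zero_iff.2 ⟨hu, hu1⟩]
  rfl

lemma digit_succ_half_shift {u : ℝ} (hu : 0 ≤ u) (k : ℕ) :
    digit (k+1) ((u+1)/2) = digit k u := by
  unfold digit
  have h1 : (u+1)/2 * 2 ^ (k+1+1) = u * 2 ^ (k+1) + 2 ^ (k+1) := by ring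
  rw [h1]
  have h2 : ⌊u * 2 ^ (k+1) + (2:ℝ) ^ (k+1)⌋ = ⌊u * 2 ^ (k+1)⌋ + 2 ^ (k+1) := by
    rw [show ((2:ℝ) ^ (k+1)) = ((2 ^ (k+1) : ℤ) : ℝ) by push_cast; ring, Int.floor_add_intCast]
  rw [h2]
  have h3 : 0 ≤ ⌊u * 2 ^ (k+1)⌋ := Int.floor_nonneg.2 (by positivity)
  rw [Int.toNat_add h3 (by positivity)]
  omega

lemma digit_zero_half_shift {u : ℝ} (hu : 0 ≤ u) (hu1 : u < 1) : digit 0 ((u+1)/2) = 1 := by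
  unfold digit
  have : (u+1)/2 * 2 ^ (0+1) = u + 1 := by ring
  rw [this]
  have h4 : ⌊u + 1⌋ = 1 := by
    rw [Int.floor_add_one, Int.floor_eq_zero_iff.2 ⟨hu, hu1⟩]; ring
  rw [h4]
  rfl

lemma walsh_half {u : ℝ} (hu : 0 ≤ u) (hu1 : u < 1) (m : ℕ) :
    walsh m (u/2) = walsh (m/2) u := by
  rw [walsh_eq_sum (m := m) (N := m + 2) (lt_two_pow_of_le (by omega)) (u/2),
      walsh_eq_sum (m := m/2) (N := m + 1) (lt_two_pow_of_le (by omega)) u]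
  congr 1
  rw [Finset.sum_range_succ' (fun k => eps k m * digit k (u/2)) (m+1)]
  rw [digit_zero_half hu hu1, mul_zero, add_zero]
  apply Finset.sum_congr rfl
  intro j _
  rw [digit_succ_half u j]
  congr 1
  simp [eps, Nat.testBit_div_two]

lemma walsh_half_shift {u : ℝ} (hu : 0 ≤ u) (hu1 : u < 1) (m : ℕ) :
    walsh m ((u+1)/2) = (-1 : ℝ) ^ (eps 0 m) * walsh (m/2) u := by
  rw [walsh_eq_sum (m := m) (N := m + 2) (lt_two_pow_of_le (by omega)) ((u+1)/2),
      walsh_eq_sum (m := m/2) (N := m + 1) (lt_two_pow_of_le (by omega)) u, ← pow_add]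
  congr 1
  rw [Finset.sum_range_succ' (fun k => eps k m * digit k ((u+1)/2)) (m+1)]
  rw [digit_zero_half_shift hu hu1, mul_one, add_comm]
  congr 1
  apply Finset.sum_congr rfl
  intro j _
  rw [digit_succ_half_shift hu j]
  congr 1
  simp [eps, Nat.testBit_div_two]



lemma setIntegral_half_left (m : ℕ) :
    ∫ x in Set.Ico (0:ℝ) (1/2), walsh m x = (1/2) * ∫ u in Set.Ico (0:ℝ) 1, walsh (m/2) u := by
  have e1 : ∫ x in Set.Ico (0:ℝ) (1/2), walsh m x = ∫ x in (0:ℝ)..(1/2), walsh m x := by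
    rw [intervalIntegral.integral_of_le (by norm_num),
        setIntegral_congr_set Ico_ae_eq_Ioc]
  have e2 : ∫ u in (0:ℝ)..1, walsh m (u/2) = (2:ℝ) • ∫ x in (0:ℝ)..(1/2:ℝ), walsh m x := by
    have h := intervalIntegral.integral_comp_div (a := (0:ℝ)) (b := 1) (walsh m)
      (two_ne_zero)
    rw [show (0:ℝ)/2 = 0 by norm_num] at h
    exact h
  have e3 : ∫ u in (0:ℝ)..1, walsh m (u/2) = ∫ u in Set.Ico (0:ℝ) 1, walsh (m/2) u := by
    rw [intervalIntegral.integral_of_le (by norm_num),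
        ← setIntegral_congr_set Ico_ae_eq_Ioc]
    refine setIntegral_congr_fun measurableSet_Ico ?_
    intro u hu
    exact walsh_half hu.1 hu.2 m
  rw [e1]
  rw [e3] at e2
  rw [smul_eq_mul] at e2
  linarith [e2]

lemma setIntegral_half_right (m : ℕ) :
    ∫ x in Set.Ico (1/2:ℝ) 1, walsh m x
      = (1/2) * ((-1:ℝ) ^ eps 0 m * ∫ u in Set.Ico (0:ℝ) 1, walsh (m/2) u) := by
  have e1 : ∫ x in Set.Ico (1/2:ℝ) 1, walsh m x = ∫ x in (1/2:ℝ)..1, walsh m x := by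
    rw [intervalIntegral.integral_of_le (by norm_num),
        setIntegral_congr_set Ico_ae_eq_Ioc]
  have e4 : ∫ u in (0:ℝ)..1, walsh m ((u+1)/2) = ∫ y in (0+1:ℝ)..(1+1:ℝ), walsh m (y/2) :=
    intervalIntegral.integral_comp_add_right (fun y => walsh m (y/2)) 1
  have e2 : ∫ y in (0+1:ℝ)..(1+1:ℝ), walsh m (y/2) = (2:ℝ) • ∫ x in (1/2:ℝ)..(1:ℝ), walsh m x := by
    have h := intervalIntegral.integral_comp_div (a := (0+1:ℝ)) (b := (1+1:ℝ)) (walsh m)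
      (two_ne_zero)
    rw [show (0+1:ℝ)/2 = 1/2 by norm_num, show (1+1:ℝ)/2 = 1 by norm_num] at h
    exact h
  have e3 : ∫ u in (0:ℝ)..1, walsh m ((u+1)/2)
      = (-1:ℝ) ^ eps 0 m * ∫ u in Set.Ico (0:ℝ) 1, walsh (m/2) u := by
    rw [intervalIntegral.integral_of_le (by norm_num),
        ← setIntegral_congr_set Ico_ae_eq_Ioc, ← integral_const_mul]
    refine setIntegral_congr_fun measurableSet_Ico ?_
    intro u hu
    exact walsh_half_shift hu.1 hu.2 m
  rw [e1]
  rw [e2] at e4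
  rw [e3] at e4
  rw [smul_eq_mul] at e4
  linarith [e4]

lemma integral_walsh (m : ℕ) :
    ∫ x in Set.Ico (0:ℝ) 1, walsh m x = if m = 0 then 1 else 0 := by
  induction m using Nat.strong_induction_on with
  | _ m ih =>
    rcases Nat.eq_zero_or_pos m with rfl | hm
    · simp only [if_pos rfl]
      rw [setIntegral_congr_fun measurableSet_Ico (g := fun _ => (1:ℝ))
        (fun x _ => walsh_zero x)]
      simp [Real.volume_Ico]
    · rw [if_neg hm.ne']
      have hsplit : ∫ x in Set.Ico (0:ℝ) 1, walsh m x
          = (∫ x in Set.Ico (0:ℝ) (1/2), walsh m x) + ∫ x in Set.Ico (1/2:ℝ) 1, walsh m x := by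
        rw [← MeasureTheory.setIntegral_union (Set.Ico_disjoint_Ico_same)
          measurableSet_Ico (integrableOn_walsh m 0 (1/2)) (integrableOn_walsh m (1/2) 1),
          Set.Ico_union_Ico_eq_Ico (by norm_num) (by norm_num)]
      rw [hsplit, setIntegral_half_left, setIntegral_half_right]
      rcases Nat.even_or_odd m with he | ho
      · have h0 : eps 0 m = 0 := by
          simp [eps, Nat.testBit_zero, Nat.even_iff.1 he]
        have hlt : m / 2 < m := Nat.div_lt_self hm (by norm_num)
        have hne : m / 2 ≠ 0 := by
          intro h
          have := Nat.div_add_mod m 2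
          rw [h, Nat.even_iff.1 he] at this
          omega
        rw [ih (m/2) hlt, if_neg hne, h0]
        ring
      · have h1 : eps 0 m = 1 := by
          simp [eps, Nat.testBit_zero, Nat.odd_iff.1 ho]
        rw [h1]
        ring




lemma two_pow_add_eq_xor {n j : ℕ} (h : j < 2 ^ n) : 2 ^ n + j = 2 ^ n ^^^ j := by
  apply Nat.eq_of_testBit_eq
  intro k
  rw [Nat.testBit_xor, Nat.testBit_two_pow]
  rcases lt_trichotomy k n with hk | rfl | hk
  · rw [Nat.testBit_two_pow_add_gt hk]
    simp [Nat.ne_of_gt hk]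
  · rw [Nat.testBit_two_pow_add_eq]
    simp [Nat.testBit_lt_two_pow h]
  · have h1 : 2 ^ n + j < 2 ^ k := by
      calc 2 ^ n + j < 2 ^ n + 2 ^ n := by omega
      _ = 2 ^ (n + 1) := by ring
      _ ≤ 2 ^ k := Nat.pow_le_pow_right (by norm_num) hk
    rw [Nat.testBit_lt_two_pow h1,
      Nat.testBit_lt_two_pow (h.trans_le (Nat.pow_le_pow_right (by norm_num) hk.le))]
    simp [Nat.ne_of_lt hk]

lemma walsh_two_pow_add {n j : ℕ} (h : j < 2 ^ n) (x : ℝ) :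
    walsh (2 ^ n + j) x = walsh (2 ^ n) x * walsh j x := by
  rw [walsh_mul, two_pow_add_eq_xor h]

lemma walsh_two_pow (n : ℕ) (x : ℝ) : walsh (2 ^ n) x = (-1 : ℝ) ^ digit n x := by
  unfold walsh
  congr 1
  rw [Finset.sum_eq_single n]
  · simp [eps, Nat.testBit_two_pow]
  · intro k _ hk
    simp [eps, Nat.testBit_two_pow, Ne.symm hk]
  · intro hn
    exact absurd (Finset.mem_range.2 (Nat.lt_succ_of_lt n.lt_two_pow_self)) hn

/-- `D_{2^{n+1}} - D_{2^n} = w_{2^n} · D_{2^n}` pointwise. -/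
lemma dirichlet_diff (n : ℕ) (x : ℝ) :
    D (2 ^ (n+1)) x - D (2 ^ n) x = walsh (2 ^ n) x * D (2 ^ n) x := by
  unfold D
  rw [← Finset.sum_Ico_eq_sub _ (Nat.pow_le_pow_right (by norm_num) (Nat.le_succ n)),
    Finset.sum_Ico_eq_sum_range, Finset.mul_sum]
  have h2 : 2 ^ (n+1) - 2 ^ n = 2 ^ n := by
    rw [pow_succ]; omega
  rw [h2]
  apply Finset.sum_congr rfl
  intro j hj
  exact walsh_two_pow_add (Finset.mem_range.1 hj) x

/-- Explicit formula for `D_{2^m}` on `[0,1)`. -/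
lemma D_two_pow {x : ℝ} (hx0 : 0 ≤ x) (hx1 : x < 1) (m : ℕ) :
    D (2 ^ m) x = if x * 2 ^ m < 1 then (2 ^ m : ℝ) else 0 := by
  induction m with
  | zero =>
    simp only [pow_zero, mul_one, if_pos hx1]
    unfold D
    simp [walsh_zero]
  | succ m ih =>
    have hstep : D (2 ^ (m+1)) x = D (2 ^ m) x + walsh (2 ^ m) x * D (2 ^ m) x := by
      have := dirichlet_diff m x
      linarith
    rw [hstep, ih, walsh_two_pow]
    rcases lt_or_ge (x * 2 ^ (m+1)) 1 with h1 | h1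
    · have hm : x * 2 ^ m < 1 := by
        have : x * 2 ^ m ≤ x * 2 ^ (m+1) := by
          apply mul_le_mul_of_nonneg_left _ hx0
          exact pow_le_pow_right₀ (by norm_num) (Nat.le_succ m)
        linarith
      have hd : digit m x = 0 := by
        unfold digit
        have : ⌊x * 2 ^ (m+1)⌋ = 0 := Int.floor_eq_zero_iff.2 ⟨by positivity, h1⟩
        rw [this]; rfl
      rw [if_pos h1, if_pos hm, hd]
      ring
    · rw [if_neg (not_lt.2 h1)]
      rcases lt_or_ge (x * 2 ^ m) 1 with hm | hm
      · have hd : digit m x = 1 := by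
          unfold digit
          have h2 : x * 2 ^ (m+1) < 2 := by
            have : x * 2 ^ (m+1) = (x * 2 ^ m) * 2 := by ring
            linarith [this ▸ (by linarith : (x * 2^m) * 2 < 2)]
          have : ⌊x * 2 ^ (m+1)⌋ = 1 := by
            rw [Int.floor_eq_iff]
            constructor
            · push_cast; linarith
            · push_cast; linarith
          rw [this]; rfl
        rw [if_pos hm, hd]
        ring
      · rw [if_neg (not_lt.2 hm)]
        ring

lemma D_two_pow_nonneg {x : ℝ} (hx0 : 0 ≤ x) (hx1 : x < 1) (m : ℕ) : 0 ≤ D (2 ^ m) x := by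
  rw [D_two_pow hx0 hx1]
  split <;> positivity



lemma coeff_eq (n i : ℕ) :
    (∫ t in Set.Ico (0:ℝ) 1, (D (2 ^ (n+1)) t - D (2 ^ n) t) * walsh i t)
      = if i ∈ Finset.Ico (2 ^ n) (2 ^ (n+1)) then 1 else 0 := by
  have hfun : ∀ t : ℝ, (D (2 ^ (n+1)) t - D (2 ^ n) t) * walsh i t
      = ∑ k ∈ Finset.Ico (2 ^ n) (2 ^ (n+1)), walsh (k ^^^ i) t := by
    intro t
    unfold D
    rw [← Finset.sum_Ico_eq_sub _ (Nat.pow_le_pow_right (by norm_num) (Nat.le_succ n)),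
      Finset.sum_mul]
    exact Finset.sum_congr rfl fun k _ => walsh_mul k i t
  simp only [hfun]
  rw [MeasureTheory.integral_finset_sum _ (fun k _ => integrableOn_walsh _ 0 1)]
  have : ∀ k ∈ Finset.Ico (2 ^ n) (2 ^ (n+1)),
      (∫ t in Set.Ico (0:ℝ) 1, walsh (k ^^^ i) t) = if k = i then 1 else 0 := by
    intro k _
    rw [integral_walsh]
    simp [xor_eq_zero_iff]
  rw [Finset.sum_congr rfl this, Finset.sum_ite_eq' _ i (fun _ => (1:ℝ))]

lemma S_eq (n m : ℕ) (x : ℝ) :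
    S (fun y => D (2 ^ (n+1)) y - D (2 ^ n) y) (2 ^ m) x
      = if n + 1 ≤ m then D (2 ^ (n+1)) x - D (2 ^ n) x else 0 := by
  unfold S
  simp only [coeff_eq n, ite_mul, one_mul, zero_mul]
  rw [Finset.sum_ite_mem]
  rcases le_or_gt (n + 1) m with h | h
  · rw [if_pos h]
    have hsub : Finset.Ico (2 ^ n) (2 ^ (n+1)) ⊆ Finset.range (2 ^ m) := by
      intro k hk
      rw [Finset.mem_range]
      exact (Finset.mem_Ico.1 hk).2.trans_le (Nat.pow_le_pow_right (by norm_num) h)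
    rw [Finset.inter_eq_right.2 hsub, Finset.sum_Ico_eq_sub _
      (Nat.pow_le_pow_right (by norm_num) (Nat.le_succ n))]
    rfl
  · rw [if_neg (by omega)]
    have : Finset.range (2 ^ m) ∩ Finset.Ico (2 ^ n) (2 ^ (n+1)) = ∅ := by
      apply Finset.eq_empty_of_forall_notMem
      intro k hk
      rw [Finset.mem_inter, Finset.mem_range, Finset.mem_Ico] at hk
      have : 2 ^ m ≤ 2 ^ n := Nat.pow_le_pow_right (by norm_num) (by omega)
      omega
    rw [this, Finset.sum_empty]




end Walsh

/-- for `f_n = D_{2^{n+1}} - D_{2^n}` one has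
`sup_m |S_{2^m}(f_n)| = D_{2^n}` pointwise on `[0,1)` and `‖f_n‖_{H_p} = 2^{n(1-1/p)}`. -/
theorem maximal_partial_sum_of_dirichlet_difference (n : ℕ) :
    (∀ x ∈ Set.Ico (0:ℝ) 1,
      (⨆ m : ℕ, |Walsh.S (fun y => Walsh.D (2 ^ (n + 1)) y - Walsh.D (2 ^ n) y) (2 ^ m) x|)
        = Walsh.D (2 ^ n) x)
    ∧ ∀ p : ℝ, 0 < p → p ≤ 1 →
        Walsh.HpNorm p (fun y => Walsh.D (2 ^ (n + 1)) y - Walsh.D (2 ^ n) y)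
          = ENNReal.ofReal ((2:ℝ) ^ ((n:ℝ) * (1 - 1/p))) := by
  have hS : ∀ x : ℝ, 0 ≤ x → x < 1 → ∀ m : ℕ,
      |Walsh.S (fun y => Walsh.D (2 ^ (n + 1)) y - Walsh.D (2 ^ n) y) (2 ^ m) x|
        = if n + 1 ≤ m then Walsh.D (2 ^ n) x else 0 := by
    intro x hx0 hx1 m
    rw [Walsh.S_eq]
    split_ifs
    · rw [Walsh.dirichlet_diff, abs_mul, Walsh.abs_walsh, one_mul,
        abs_of_nonneg (Walsh.D_two_pow_nonneg hx0 hx1 n)]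
    · exact abs_zero
  have hpart1 : ∀ x ∈ Set.Ico (0:ℝ) 1,
      (⨆ m : ℕ, |Walsh.S (fun y => Walsh.D (2 ^ (n + 1)) y - Walsh.D (2 ^ n) y) (2 ^ m) x|)
        = Walsh.D (2 ^ n) x := by
    rintro x ⟨hx0, hx1⟩
    have hDnn := Walsh.D_two_pow_nonneg hx0 hx1 n
    apply le_antisymm
    · apply ciSup_le
      intro m
      show |Walsh.S (fun y => Walsh.D (2 ^ (n + 1)) y - Walsh.D (2 ^ n) y) (2 ^ m) x|
        ≤ Walsh.D (2 ^ n) x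
      rw [hS x hx0 hx1 m]
      split_ifs
      · exact le_refl _
      · exact hDnn
    · have hb : BddAbove (Set.range fun m : ℕ =>
          |Walsh.S (fun y => Walsh.D (2 ^ (n + 1)) y - Walsh.D (2 ^ n) y) (2 ^ m) x|) := by
        refine ⟨Walsh.D (2 ^ n) x, ?_⟩
        rintro _ ⟨m, rfl⟩
        show |Walsh.S (fun y => Walsh.D (2 ^ (n + 1)) y - Walsh.D (2 ^ n) y) (2 ^ m) x|
          ≤ Walsh.D (2 ^ n) x
        rw [hS x hx0 hx1 m]
        split_ifs
        · exact le_refl _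
        · exact hDnn
      have := le_ciSup hb (n + 1)
      rwa [hS x hx0 hx1 (n + 1), if_pos (le_refl _)] at this
  refine ⟨hpart1, ?_⟩
  intro p hp hp1
  have hmax : ∀ x : ℝ, 0 ≤ x → x < 1 →
      Walsh.maxS (fun y => Walsh.D (2 ^ (n + 1)) y - Walsh.D (2 ^ n) y) x
        = ENNReal.ofReal (Walsh.D (2 ^ n) x) := by
    intro x hx0 hx1
    have hDnn := Walsh.D_two_pow_nonneg hx0 hx1 n
    apply le_antisymm
    · apply iSup_le
      intro m
      show ENNReal.ofReal |Walsh.S (fun y => Walsh.D (2 ^ (n + 1)) y - Walsh.D (2 ^ n) y)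
        (2 ^ m) x| ≤ _
      apply ENNReal.ofReal_le_ofReal
      rw [hS x hx0 hx1 m]
      split_ifs
      · exact le_refl _
      · exact hDnn
    · refine le_iSup_of_le (n + 1) ?_
      rw [hS x hx0 hx1 (n + 1), if_pos (le_refl _)]
  unfold Walsh.HpNorm
  set a : ℝ := ((2:ℝ) ^ n)⁻¹ with ha
  have ha0 : (0:ℝ) ≤ a := by positivity
  have ha1 : a ≤ 1 := by
    rw [ha]
    apply inv_le_one_of_one_le₀
    exact one_le_pow₀ (by norm_num)
  have hIeq : (∫⁻ x in Set.Ico (0:ℝ) 1,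
      Walsh.maxS (fun y => Walsh.D (2 ^ (n + 1)) y - Walsh.D (2 ^ n) y) x ^ p)
        = (ENNReal.ofReal ((2:ℝ) ^ n)) ^ p * ENNReal.ofReal a := by
    rw [setLIntegral_congr_fun measurableSet_Ico
      (g := fun x => ENNReal.ofReal (Walsh.D (2 ^ n) x) ^ p)
      (fun x hx => by rw [hmax x hx.1 hx.2])]
    rw [← Set.Ico_union_Ico_eq_Ico ha0 ha1,
      lintegral_union measurableSet_Ico Set.Ico_disjoint_Ico_same]
    have hA : (∫⁻ x in Set.Ico (0:ℝ) a, ENNReal.ofReal (Walsh.D (2 ^ n) x) ^ p)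
        = (ENNReal.ofReal ((2:ℝ) ^ n)) ^ p * ENNReal.ofReal a := by
      rw [setLIntegral_congr_fun measurableSet_Ico
        (g := fun _ => (ENNReal.ofReal ((2:ℝ) ^ n)) ^ p)
        (fun x hx => ?_)]
      · rw [MeasureTheory.setLIntegral_const, Real.volume_Ico, sub_zero]
      · have hx1 : x < 1 := lt_of_lt_of_le hx.2 ha1
        have hxa : x * 2 ^ n < 1 := by
          have := hx.2
          rw [ha] at this
          calc x * 2 ^ n < a * 2 ^ n := by
                apply mul_lt_mul_of_pos_right this (by positivity)
          _ = 1 := by rw [ha]; field_simp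
        rw [Walsh.D_two_pow hx.1 hx1, if_pos hxa]
    have hB : (∫⁻ x in Set.Ico a 1, ENNReal.ofReal (Walsh.D (2 ^ n) x) ^ p) = 0 := by
      rw [setLIntegral_congr_fun measurableSet_Ico (g := fun _ => (0:ℝ≥0∞))
        (fun x hx => ?_)]
      · exact lintegral_zero
      · have hx0 : (0:ℝ) ≤ x := le_trans ha0 hx.1
        have hxa : ¬ (x * 2 ^ n < 1) := by
          rw [not_lt]
          have := hx.1
          rw [ha] at this
          calc (1:ℝ) = ((2:ℝ)^n)⁻¹ * 2 ^ n := by field_simp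
          _ ≤ x * 2 ^ n := by
                apply mul_le_mul_of_nonneg_right this (by positivity)
        rw [Walsh.D_two_pow hx0 hx.2, if_neg hxa, ENNReal.ofReal_zero,
          ENNReal.zero_rpow_of_pos hp]
    rw [hA, hB, add_zero]
  rw [hIeq]
  have h2 : (ENNReal.ofReal ((2:ℝ) ^ n)) ^ p = ENNReal.ofReal ((2:ℝ) ^ ((n:ℝ) * p)) := by
    rw [ENNReal.ofReal_rpow_of_pos (by positivity)]
    congr 1
    rw [← Real.rpow_natCast 2 n, ← Real.rpow_mul (by norm_num)]
  have h3 : ENNReal.ofReal a = ENNReal.ofReal ((2:ℝ) ^ (-(n:ℝ))) := by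
    rw [ha, Real.rpow_neg (by norm_num), Real.rpow_natCast]
  rw [h2, h3, ← ENNReal.ofReal_mul (by positivity),
    ← Real.rpow_add (by norm_num : (0:ℝ) < 2),
    ENNReal.ofReal_rpow_of_pos (by positivity),
    ← Real.rpow_mul (by norm_num : (0:ℝ) ≤ 2)]
  congr 2
  field_simp
  ring
end
end
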